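/- Let G=(V,E) be a finite simple undirected graph with β_e > 1 for all e ∈ E and 0 < λ_v ≤ 1 for all v ∈ V, and let the weighted random cluster model have edge parameters p_e = 1 − 1/β_e and vertex weights λ. Let P_SW^wrc = P_{R→I}·P_{I→R} be the Swendsen-Wang dynamics for the weighted random cluster model, and let P_EF be the lazy edge-flipping (Metropolis) dynamics for π_wrc. Then Gap(P_SW^wrc) ≥ Gap(P_EF)/3. -/

import Mathlib

open Finset
open scoped Classical

noncomputable section

variable {V : Type*} [Fintype V] [DecidableEq V]

/-- The vertex set of the connected component of `v` in the graph `(V, S)`. -/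
def compOf (S : Finset (Sym2 V)) (v : V) : Finset V :=
  Finset.univ.filter fun u => (SimpleGraph.fromEdgeSet (↑S : Set (Sym2 V))).Reachable v u

/-- `κ(V,S)`: the set of vertex sets of connected components of the graph `(V, S)`. -/
def kappa (S : Finset (Sym2 V)) : Finset (Finset V) :=
  Finset.univ.image (compOf S)

/-- `∏_{C ∈ κ(V,S)} (1 + ∏_{u ∈ C} λ_u)`. -/
def clusterProd (S : Finset (Sym2 V)) (lam : V → ℝ) : ℝ :=
  ∏ C ∈ kappa S, (1 + ∏ u ∈ C, lam u)

/-- Weight of an edge subset `S ⊆ E₀` in the weighted random cluster model. -/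
def wtWRC (E₀ : Finset (Sym2 V)) (q : Sym2 V → ℝ) (lam : V → ℝ) (S : Finset (Sym2 V)) : ℝ :=
  (∏ e ∈ S, q e) * (∏ f ∈ E₀ \ S, (1 - q f)) * clusterProd S lam

/-- Partition function of the weighted random cluster model. -/
def ZWRC (E₀ : Finset (Sym2 V)) (q : Sym2 V → ℝ) (lam : V → ℝ) : ℝ :=
  ∑ S ∈ E₀.powerset, wtWRC E₀ q lam S

/-- The weighted random cluster distribution. -/
def piWRC (E₀ : Finset (Sym2 V)) (q : Sym2 V → ℝ) (lam : V → ℝ) (S : Finset (Sym2 V)) : ℝ :=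
  wtWRC E₀ q lam S / ZWRC E₀ q lam

/-- The monochromatic edges of a spin configuration `σ`. -/
def monoEdges (E₀ : Finset (Sym2 V)) (σ : V → Bool) : Finset (Sym2 V) :=
  E₀.filter fun e => (e.map σ).IsDiag

/-- Weight of a spin configuration in the Ising model. -/
def wtIsing (E₀ : Finset (Sym2 V)) (β : Sym2 V → ℝ) (lam : V → ℝ) (σ : V → Bool) : ℝ :=
  (∏ e ∈ monoEdges E₀ σ, β e) * ∏ v : V, (if σ v then lam v else 1)

/-- Ising partition function. -/
def ZIsing (E₀ : Finset (Sym2 V)) (β : Sym2 V → ℝ) (lam : V → ℝ) : ℝ :=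
  ∑ σ : V → Bool, wtIsing E₀ β lam σ

/-- Ising Gibbs distribution. -/
def piIsing (E₀ : Finset (Sym2 V)) (β : Sym2 V → ℝ) (lam : V → ℝ) (σ : V → Bool) : ℝ :=
  wtIsing E₀ β lam σ / ZIsing E₀ β lam

/-- Vertices of odd degree in the graph `(V, S)`. -/
def oddVerts (S : Finset (Sym2 V)) : Finset V :=
  Finset.univ.filter fun v => Odd (S.filter fun e => v ∈ e).card

/-- Weight of an edge subset in the subgraph-world model. -/
def wtSG (E₀ : Finset (Sym2 V)) (p : Sym2 V → ℝ) (η : V → ℝ) (S : Finset (Sym2 V)) : ℝ :=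
  (∏ e ∈ S, p e) * (∏ f ∈ E₀ \ S, (1 - p f)) * ∏ v ∈ oddVerts S, η v

/-- Subgraph-world partition function. -/
def ZSG (E₀ : Finset (Sym2 V)) (p : Sym2 V → ℝ) (η : V → ℝ) : ℝ :=
  ∑ S ∈ E₀.powerset, wtSG E₀ p η S

/-- Subgraph-world distribution. -/
def piSG (E₀ : Finset (Sym2 V)) (p : Sym2 V → ℝ) (η : V → ℝ) (S : Finset (Sym2 V)) : ℝ :=
  wtSG E₀ p η S / ZSG E₀ p η

/-- The transformation `P_{I→R}` from Ising configurations to edge subsets. -/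
def PIR (E₀ : Finset (Sym2 V)) (β : Sym2 V → ℝ) (σ : V → Bool) (S : Finset (Sym2 V)) : ℝ :=
  if S ⊆ monoEdges E₀ σ then
    (∏ e ∈ S, (1 - (β e)⁻¹)) * ∏ f ∈ monoEdges E₀ σ \ S, (β f)⁻¹
  else 0

/-- The transformation `P_{R→I}` from edge subsets to Ising configurations. -/
def PRI (E₀ : Finset (Sym2 V)) (lam : V → ℝ) (S : Finset (Sym2 V)) (σ : V → Bool) : ℝ :=
  if S ⊆ monoEdges E₀ σ then
    ∏ C ∈ kappa S, ((∏ v ∈ C, if σ v then lam v else 1) / (1 + ∏ v ∈ C, lam v))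
  else 0

/-- Swendsen-Wang dynamics for the Ising model: `P_{I→R} ⬝ P_{R→I}`. -/
def PSWIsing (E₀ : Finset (Sym2 V)) (β : Sym2 V → ℝ) (lam : V → ℝ) (σ τ : V → Bool) : ℝ :=
  ∑ S ∈ E₀.powerset, PIR E₀ β σ S * PRI E₀ lam S τ

/-- Swendsen-Wang dynamics for the weighted random cluster model: `P_{R→I} ⬝ P_{I→R}`. -/
def PSWwrc (E₀ : Finset (Sym2 V)) (β : Sym2 V → ℝ) (lam : V → ℝ)
    (S S' : Finset (Sym2 V)) : ℝ :=
  ∑ σ : V → Bool, PRI E₀ lam S σ * PIR E₀ β σ S'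

/-- Lazy edge-flipping (Metropolis) dynamics for a distribution `pi` on subsets of `E₀`. -/
def PEF (E₀ : Finset (Sym2 V)) (pi : Finset (Sym2 V) → ℝ) (x y : Finset (Sym2 V)) : ℝ :=
  if x = y then
    1 - (1 / (2 * (E₀.card : ℝ))) * ∑ e ∈ E₀, min 1 (pi (symmDiff x {e}) / pi x)
  else if (symmDiff x y).card = 1 then
    (1 / (2 * (E₀.card : ℝ))) * min 1 (pi y / pi x)
  else 0

/-- Variance of `f` with respect to a distribution `pi` supported on `states`. -/
def varOn {α : Type*} (states : Finset α) (pi f : α → ℝ) : ℝ :=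
  (∑ x ∈ states, pi x * f x ^ 2) - (∑ x ∈ states, pi x * f x) ^ 2

/-- Dirichlet form of a Markov kernel `P` with stationary distribution `pi` on `states`. -/
def dirichletOn {α : Type*} (states : Finset α) (pi : α → ℝ) (P : α → α → ℝ) (f : α → ℝ) : ℝ :=
  ∑ x ∈ states, pi x * f x * (f x - ∑ y ∈ states, P x y * f y)

/-- Spectral gap of a reversible Markov kernel `P` with stationary distribution `pi`. -/
def gapOn {α : Type*} (states : Finset α) (pi : α → ℝ) (P : α → α → ℝ) : ℝ :=
  sInf ((fun f : α → ℝ => dirichletOn states pi P f / varOn states pi f) ''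
    {f | varOn states pi f ≠ 0})

/-- Total variation distance between two distributions on `states`. -/
def dTV {α : Type*} (states : Finset α) (μ ν : α → ℝ) : ℝ :=
  (1 / 2) * ∑ z ∈ states, |μ z - ν z|

/-- `t`-step transition probabilities of the Markov kernel `P` on state space `states`. -/
def kpow {α : Type*} (states : Finset α) (P : α → α → ℝ) : ℕ → α → α → ℝ
  | 0 => fun x y => if x = y then 1 else 0
  | (t + 1) => fun x y => ∑ z ∈ states, P x z * kpow states P t z y


namespace SWProof
set_option linter.unusedSectionVars false

open SimpleGraph

variable {V : Type*} [Fintype V] [DecidableEq V]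

lemma mem_compOf {S : Finset (Sym2 V)} {v u : V} :
    u ∈ compOf S v ↔ (SimpleGraph.fromEdgeSet (↑S : Set (Sym2 V))).Reachable v u := by
  simp [compOf]

lemma self_mem_compOf (S : Finset (Sym2 V)) (v : V) : v ∈ compOf S v :=
  mem_compOf.2 (SimpleGraph.Reachable.refl v)

lemma compOf_nonempty (S : Finset (Sym2 V)) (v : V) : (compOf S v).Nonempty :=
  ⟨v, self_mem_compOf S v⟩

lemma compOf_eq_of_reachable {S : Finset (Sym2 V)} {v u : V}
    (h : (SimpleGraph.fromEdgeSet (↑S : Set (Sym2 V))).Reachable v u) :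
    compOf S v = compOf S u := by
  ext w
  simp only [mem_compOf]
  exact ⟨fun h2 => h.symm.trans h2, fun h2 => h.trans h2⟩

lemma compOf_eq_of_mem {S : Finset (Sym2 V)} {v u : V} (h : u ∈ compOf S v) :
    compOf S u = compOf S v :=
  (compOf_eq_of_reachable (mem_compOf.1 h)).symm

lemma mem_kappa {S : Finset (Sym2 V)} {C : Finset V} :
    C ∈ kappa S ↔ ∃ v, compOf S v = C := by
  simp [kappa, eq_comm]

lemma eq_compOf_of_mem_kappa {S : Finset (Sym2 V)} {C : Finset V} (hC : C ∈ kappa S)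
    {u : V} (hu : u ∈ C) : C = compOf S u := by
  obtain ⟨v, rfl⟩ := mem_kappa.1 hC
  exact (compOf_eq_of_mem hu).symm

lemma kappa_nonempty_mem {S : Finset (Sym2 V)} {C : Finset V} (hC : C ∈ kappa S) :
    C.Nonempty := by
  obtain ⟨v, rfl⟩ := mem_kappa.1 hC
  exact compOf_nonempty S v

lemma kappa_biUnion (S : Finset (Sym2 V)) : (kappa S).biUnion id = Finset.univ := by
  ext v
  simp only [Finset.mem_biUnion, id, Finset.mem_univ, iff_true]
  exact ⟨compOf S v, mem_kappa.2 ⟨v, rfl⟩, self_mem_compOf S v⟩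

lemma kappa_pairwiseDisjoint (S : Finset (Sym2 V)) :
    (↑(kappa S) : Set (Finset V)).PairwiseDisjoint id := by
  intro C hC D hD hne
  simp only [Finset.coe_mem, Finset.mem_coe] at hC hD
  refine Finset.disjoint_left.2 fun u huC huD => hne ?_
  rw [eq_compOf_of_mem_kappa hC huC, eq_compOf_of_mem_kappa hD huD]

/-- product over all vertices splits as product over components -/
lemma prod_kappa_split (S : Finset (Sym2 V)) (g : V → ℝ) :
    ∏ v : V, g v = ∏ C ∈ kappa S, ∏ v ∈ C, g v := by
  rw [← kappa_biUnion S, Finset.prod_biUnion (kappa_pairwiseDisjoint S)]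
  rfl

lemma sym2_map_isDiag {σ : V → Bool} {x y : V} :
    (Sym2.map σ s(x, y)).IsDiag ↔ σ x = σ y := by
  simp [Sym2.map_pair_eq, Sym2.isDiag_iff_proj_eq]

lemma mem_monoEdges {E₀ : Finset (Sym2 V)} {σ : V → Bool} {x y : V} :
    s(x, y) ∈ monoEdges E₀ σ ↔ s(x, y) ∈ E₀ ∧ σ x = σ y := by
  simp [monoEdges, sym2_map_isDiag]

/-- constancy characterization -/
lemma subset_mono_iff_const {G : SimpleGraph V} [DecidableRel G.Adj] {S : Finset (Sym2 V)}
    (hS : S ⊆ G.edgeFinset) (σ : V → Bool) :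
    S ⊆ monoEdges G.edgeFinset σ ↔
      ∀ x y : V, (SimpleGraph.fromEdgeSet (↑S : Set (Sym2 V))).Reachable x y → σ x = σ y := by
  constructor
  · intro h x y hr
    obtain ⟨w⟩ := hr
    induction w with
    | nil => rfl
    | cons ha p ih =>
      rename_i a b c
      have hab : s(a, b) ∈ S := by
        have := (SimpleGraph.fromEdgeSet_adj _).1 ha
        exact_mod_cast this.1
      have : σ a = σ b := (mem_monoEdges.1 (h hab)).2
      exact this.trans ih
  · intro h e he
    induction e with
    | h x y =>
      have hxy : s(x, y) ∈ G.edgeFinset := hS he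
      have hne : x ≠ y := by
        intro hxyeq
        have := SimpleGraph.not_isDiag_of_mem_edgeSet G (SimpleGraph.mem_edgeFinset.1 hxy)
        simp [hxyeq] at this
      have hadj : (SimpleGraph.fromEdgeSet (↑S : Set (Sym2 V))).Adj x y := by
        rw [SimpleGraph.fromEdgeSet_adj]
        exact ⟨by exact_mod_cast he, hne⟩
      exact mem_monoEdges.2 ⟨hxy, h x y hadj.reachable⟩

end SWProof
namespace SWProof
set_option linter.unusedSectionVars false
variable {V : Type*} [Fintype V] [DecidableEq V]

lemma compOf_eq_of_edge {G : SimpleGraph V} [DecidableRel G.Adj] {S : Finset (Sym2 V)} (hS : S ⊆ G.edgeFinset)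
    {x y : V} (hxy : s(x, y) ∈ S) : compOf S x = compOf S y := by
  have hne : x ≠ y := by
    intro hxyeq
    have := SimpleGraph.not_isDiag_of_mem_edgeSet G (SimpleGraph.mem_edgeFinset.1 (hS hxy))
    simp [hxyeq] at this
  have hadj : (SimpleGraph.fromEdgeSet (↑S : Set (Sym2 V))).Adj x y := by
    rw [SimpleGraph.fromEdgeSet_adj]
    exact ⟨by exact_mod_cast hxy, hne⟩
  exact compOf_eq_of_reachable hadj.reachable

/-- The master factorization lemma for sums over spin configurations. -/
lemma sumFact {G : SimpleGraph V} [DecidableRel G.Adj] {S : Finset (Sym2 V)} (hS : S ⊆ G.edgeFinset)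
    (w : V → Bool → ℝ) :
    ∑ σ : V → Bool, (if S ⊆ monoEdges G.edgeFinset σ then ∏ v : V, w v (σ v) else 0)
      = ∏ C ∈ kappa S, ((∏ v ∈ C, w v true) + (∏ v ∈ C, w v false)) := by
  classical
  rw [← Finset.sum_filter]
  have key : ∑ σ ∈ Finset.univ.filter (fun σ : V → Bool => S ⊆ monoEdges G.edgeFinset σ),
      ∏ v : V, w v (σ v)
      = ∑ τ : (↥(kappa S) → Bool), ∏ v : V, w v (τ ⟨compOf S v, mem_kappa.2 ⟨v, rfl⟩⟩) := by
    refine (Finset.sum_bij' (fun σ _ => fun C : ↥(kappa S) =>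
        σ (kappa_nonempty_mem C.2).choose)
      (fun τ _ => fun v => τ ⟨compOf S v, mem_kappa.2 ⟨v, rfl⟩⟩) ?_ ?_ ?_ ?_ ?_)
    · intro σ hσ
      exact Finset.mem_univ _
    · intro τ hτ
      simp only [Finset.mem_filter, Finset.mem_univ, true_and]
      intro e he
      induction e with
      | h x y =>
        have hc : compOf S x = compOf S y := compOf_eq_of_edge hS he
        refine mem_monoEdges.2 ⟨hS he, ?_⟩
        congr 1
        exact Subtype.ext hc
    · intro σ hσ
      simp only [Finset.mem_filter, Finset.mem_univ, true_and] at hσ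
      funext v
      have hconst := (subset_mono_iff_const hS σ).1 hσ
      have hCv : compOf S v ∈ kappa S := mem_kappa.2 ⟨v, rfl⟩
      have hmem : (kappa_nonempty_mem hCv).choose ∈ compOf S v :=
        (kappa_nonempty_mem hCv).choose_spec
      exact (hconst v _ (mem_compOf.1 hmem)).symm
    · intro τ hτ
      funext C
      have hmem : (kappa_nonempty_mem C.2).choose ∈ (C : Finset V) :=
        (kappa_nonempty_mem C.2).choose_spec
      have h2 : compOf S ((kappa_nonempty_mem C.2).choose) = (C : Finset V) :=
        (eq_compOf_of_mem_kappa C.2 hmem).symm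
      exact congrArg τ (Subtype.ext h2)
    · intro σ hσ
      simp only [Finset.mem_filter, Finset.mem_univ, true_and] at hσ
      have hconst := (subset_mono_iff_const hS σ).1 hσ
      refine Finset.prod_congr rfl fun v _ => ?_
      congr 1
      have hCv : compOf S v ∈ kappa S := mem_kappa.2 ⟨v, rfl⟩
      have hmem : (kappa_nonempty_mem hCv).choose ∈ compOf S v :=
        (kappa_nonempty_mem hCv).choose_spec
      exact hconst v _ (mem_compOf.1 hmem)
  rw [key]
  have split : ∀ τ : (↥(kappa S) → Bool),
      ∏ v : V, w v (τ ⟨compOf S v, mem_kappa.2 ⟨v, rfl⟩⟩)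
        = ∏ C ∈ (kappa S).attach, ∏ v ∈ (C : Finset V), w v (τ C) := by
    intro τ
    rw [prod_kappa_split S, ← Finset.prod_attach (kappa S)
      (fun C => ∏ v ∈ C, w v (τ ⟨compOf S v, mem_kappa.2 ⟨v, rfl⟩⟩))]
    refine Finset.prod_congr rfl fun C _ => Finset.prod_congr rfl fun v hv => ?_
    exact congrArg (w v) (congrArg τ (Subtype.ext (eq_compOf_of_mem_kappa C.2 hv).symm))
  simp only [split]
  have := Finset.prod_univ_sum (fun _ : ↥(kappa S) => (Finset.univ : Finset Bool))
    (fun C b => ∏ v ∈ (C : Finset V), w v b)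
  rw [Fintype.piFinset_univ] at this
  rw [Finset.univ_eq_attach] at this
  rw [← this]
  rw [← Finset.prod_attach (kappa S) (fun C => (∏ v ∈ C, w v true) + (∏ v ∈ C, w v false))]
  refine Finset.prod_congr rfl fun C _ => ?_
  simp

end SWProof
namespace SWProof
set_option linter.unusedSectionVars false
variable {V : Type*} [Fintype V] [DecidableEq V]

/-- vertex-factorized spin weight -/
def Lw (lam : V → ℝ) (σ : V → Bool) : ℝ := ∏ v : V, (if σ v then lam v else 1)

/-- Edwards–Sokal joint (unnormalized) weight -/
def gw (E₀ : Finset (Sym2 V)) (β : Sym2 V → ℝ) (lam : V → ℝ)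
    (S : Finset (Sym2 V)) (σ : V → Bool) : ℝ :=
  (if S ⊆ monoEdges E₀ σ then 1 else 0) * (∏ e ∈ S, (β e - 1)) * Lw lam σ

variable {G : SimpleGraph V} [DecidableRel G.Adj] {β : Sym2 V → ℝ} {lam : V → ℝ}

lemma Lw_pos (hlam : ∀ v : V, 0 < lam v ∧ lam v ≤ 1) (σ : V → Bool) : 0 < Lw lam σ := by
  refine Finset.prod_pos fun v _ => ?_
  by_cases h : σ v <;> simp [h, (hlam v).1]

lemma prodlam_pos (hlam : ∀ v : V, 0 < lam v ∧ lam v ≤ 1) (C : Finset V) :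
    0 < ∏ u ∈ C, lam u :=
  Finset.prod_pos fun v _ => (hlam v).1

lemma clusterProd_pos (hlam : ∀ v : V, 0 < lam v ∧ lam v ≤ 1) (S : Finset (Sym2 V)) :
    0 < clusterProd S lam :=
  Finset.prod_pos fun C _ => by have := prodlam_pos hlam C; linarith

lemma mono_subset (E₀ : Finset (Sym2 V)) (σ : V → Bool) : monoEdges E₀ σ ⊆ E₀ :=
  Finset.filter_subset _ _

/-- ES1 : `wtIsing · PIR = gw` -/
lemma wtIsing_mul_PIR (hβ : ∀ e ∈ G.edgeFinset, 1 < β e)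
    (σ : V → Bool) (S : Finset (Sym2 V)) :
    wtIsing G.edgeFinset β lam σ * PIR G.edgeFinset β σ S = gw G.edgeFinset β lam S σ := by
  unfold wtIsing PIR gw
  by_cases h : S ⊆ monoEdges G.edgeFinset σ
  · simp only [h, if_pos, if_true, one_mul]
    have hβne : ∀ e ∈ monoEdges G.edgeFinset σ, β e ≠ 0 := fun e he =>
      ne_of_gt (lt_trans one_pos (hβ e (mono_subset _ _ he)))
    have hsplit : ∏ e ∈ monoEdges G.edgeFinset σ, β e
        = (∏ e ∈ S, β e) * ∏ e ∈ monoEdges G.edgeFinset σ \ S, β e := by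
      rw [mul_comm, Finset.prod_sdiff h]
    have hcancel : (∏ e ∈ monoEdges G.edgeFinset σ \ S, β e)
        * (∏ f ∈ monoEdges G.edgeFinset σ \ S, (β f)⁻¹) = 1 := by
      rw [← Finset.prod_mul_distrib]
      refine Finset.prod_eq_one fun e he => ?_
      exact mul_inv_cancel₀ (hβne e (Finset.mem_sdiff.1 he).1)
    have hbm : (∏ e ∈ S, β e) * (∏ e ∈ S, (1 - (β e)⁻¹)) = ∏ e ∈ S, (β e - 1) := by
      rw [← Finset.prod_mul_distrib]
      refine Finset.prod_congr rfl fun e he => ?_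
      have hne : β e ≠ 0 := hβne e (h he)
      field_simp
    calc (∏ e ∈ monoEdges G.edgeFinset σ, β e) * Lw lam σ
        * ((∏ e ∈ S, (1 - (β e)⁻¹)) * ∏ f ∈ monoEdges G.edgeFinset σ \ S, (β f)⁻¹)
        = ((∏ e ∈ S, β e) * (∏ e ∈ S, (1 - (β e)⁻¹)))
          * ((∏ e ∈ monoEdges G.edgeFinset σ \ S, β e)
            * (∏ f ∈ monoEdges G.edgeFinset σ \ S, (β f)⁻¹)) * Lw lam σ := by
          rw [hsplit]; ring
      _ = (∏ e ∈ S, (β e - 1)) * Lw lam σ := by rw [hcancel, hbm, mul_one]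
  · simp [h, Lw]

/-- ES2 : `∑_σ gw = ∏_S (β-1) · clusterProd` -/
lemma sum_gw (hS : S ⊆ G.edgeFinset) :
    ∑ σ : V → Bool, gw G.edgeFinset β lam S σ
      = (∏ e ∈ S, (β e - 1)) * clusterProd S lam := by
  unfold gw clusterProd
  have : ∑ σ : V → Bool, (if S ⊆ monoEdges G.edgeFinset σ then 1 else 0)
      * (∏ e ∈ S, (β e - 1)) * Lw lam σ
      = (∏ e ∈ S, (β e - 1)) * ∑ σ : V → Bool,
        (if S ⊆ monoEdges G.edgeFinset σ then Lw lam σ else 0) := by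
    rw [Finset.mul_sum]
    refine Finset.sum_congr rfl fun σ _ => ?_
    by_cases h : S ⊆ monoEdges G.edgeFinset σ <;> simp [h] <;> ring
  rw [this]
  have := sumFact hS (fun v b => if b then lam v else 1)
  simp only [if_true] at this
  rw [show (∑ σ : V → Bool, if S ⊆ monoEdges G.edgeFinset σ then Lw lam σ else 0)
      = ∑ σ : V → Bool, (if S ⊆ monoEdges G.edgeFinset σ
        then ∏ v : V, (if σ v then lam v else 1) else 0) from rfl, this]
  congr 1
  refine Finset.prod_congr rfl fun C _ => ?_
  simp [add_comm]

/-- `∏_{E₀} β · wtWRC = ∏_S (β-1) · clusterProd` -/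
lemma B_mul_wtWRC (hβ : ∀ e ∈ G.edgeFinset, 1 < β e) (hS : S ⊆ G.edgeFinset) :
    (∏ e ∈ G.edgeFinset, β e) * wtWRC G.edgeFinset (fun e => 1 - (β e)⁻¹) lam S
      = (∏ e ∈ S, (β e - 1)) * clusterProd S lam := by
  unfold wtWRC
  have hβne : ∀ e ∈ G.edgeFinset, β e ≠ 0 := fun e he =>
    ne_of_gt (lt_trans one_pos (hβ e he))
  have hsplit : ∏ e ∈ G.edgeFinset, β e = (∏ e ∈ S, β e) * ∏ e ∈ G.edgeFinset \ S, β e := by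
    rw [mul_comm, Finset.prod_sdiff hS]
  have hcancel : (∏ e ∈ G.edgeFinset \ S, β e) * (∏ f ∈ G.edgeFinset \ S, (1 - (1 - (β f)⁻¹)))
      = 1 := by
    rw [← Finset.prod_mul_distrib]
    refine Finset.prod_eq_one fun e he => ?_
    have := hβne e (Finset.mem_sdiff.1 he).1
    field_simp
    ring
  have hbm : (∏ e ∈ S, β e) * (∏ e ∈ S, (1 - (β e)⁻¹)) = ∏ e ∈ S, (β e - 1) := by
    rw [← Finset.prod_mul_distrib]
    refine Finset.prod_congr rfl fun e he => ?_
    have hne : β e ≠ 0 := hβne e (hS he)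
    field_simp
  calc (∏ e ∈ G.edgeFinset, β e)
      * ((∏ e ∈ S, (1 - (β e)⁻¹)) * (∏ f ∈ G.edgeFinset \ S, (1 - (1 - (β f)⁻¹)))
        * clusterProd S lam)
      = ((∏ e ∈ S, β e) * (∏ e ∈ S, (1 - (β e)⁻¹)))
        * ((∏ e ∈ G.edgeFinset \ S, β e) * (∏ f ∈ G.edgeFinset \ S, (1 - (1 - (β f)⁻¹))))
        * clusterProd S lam := by rw [hsplit]; ring
    _ = (∏ e ∈ S, (β e - 1)) * clusterProd S lam := by rw [hcancel, hbm, mul_one]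

/-- ES3 : `B · wtWRC · PRI = gw` -/
lemma wtWRC_mul_PRI (hβ : ∀ e ∈ G.edgeFinset, 1 < β e)
    (hlam : ∀ v : V, 0 < lam v ∧ lam v ≤ 1) (hS : S ⊆ G.edgeFinset) (σ : V → Bool) :
    (∏ e ∈ G.edgeFinset, β e) * wtWRC G.edgeFinset (fun e => 1 - (β e)⁻¹) lam S
      * PRI G.edgeFinset lam S σ = gw G.edgeFinset β lam S σ := by
  rw [B_mul_wtWRC hβ hS]
  unfold PRI gw
  by_cases h : S ⊆ monoEdges G.edgeFinset σ
  · simp only [h, if_pos, if_true, one_mul]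
    rw [mul_assoc]
    congr 1
    unfold clusterProd Lw
    rw [← Finset.prod_mul_distrib, prod_kappa_split S (fun v => if σ v then lam v else 1)]
    refine Finset.prod_congr rfl fun C _ => ?_
    have hpos : (0:ℝ) < 1 + ∏ u ∈ C, lam u := by
      have := prodlam_pos hlam C; linarith
    field_simp
  · simp [h]

/-- row sum : `∑_{S ∈ Ω} gw S σ = wtIsing σ` -/
lemma sum_gw_over_S (hβ : ∀ e ∈ G.edgeFinset, 1 < β e) (σ : V → Bool) :
    ∑ S ∈ G.edgeFinset.powerset, gw G.edgeFinset β lam S σ = wtIsing G.edgeFinset β lam σ := by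
  unfold gw wtIsing
  have hfil : G.edgeFinset.powerset.filter (fun S => S ⊆ monoEdges G.edgeFinset σ)
      = (monoEdges G.edgeFinset σ).powerset := by
    ext S
    simp only [Finset.mem_filter, Finset.mem_powerset]
    exact ⟨fun h => h.2, fun h => ⟨h.trans (mono_subset _ _), h⟩⟩
  have : ∑ S ∈ G.edgeFinset.powerset,
      (if S ⊆ monoEdges G.edgeFinset σ then 1 else 0) * (∏ e ∈ S, (β e - 1)) * Lw lam σ
      = ∑ S ∈ (monoEdges G.edgeFinset σ).powerset, (∏ e ∈ S, (β e - 1)) * Lw lam σ := by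
    rw [← hfil, Finset.sum_filter]
    refine Finset.sum_congr rfl fun S _ => ?_
    by_cases h : S ⊆ monoEdges G.edgeFinset σ <;> simp [h]
  rw [this, ← Finset.sum_mul]
  congr 1
  have := Finset.prod_add (fun e => β e - 1) (fun _ => (1:ℝ)) (monoEdges G.edgeFinset σ)
  simp only [Finset.prod_const_one, mul_one, sub_add_cancel] at this
  rw [← this]

/-- `ZIsing = B · ZWRC` -/
lemma ZIsing_eq (hβ : ∀ e ∈ G.edgeFinset, 1 < β e)
    (hlam : ∀ v : V, 0 < lam v ∧ lam v ≤ 1) :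
    ZIsing G.edgeFinset β lam
      = (∏ e ∈ G.edgeFinset, β e) * ZWRC G.edgeFinset (fun e => 1 - (β e)⁻¹) lam := by
  unfold ZIsing ZWRC
  rw [Finset.mul_sum]
  rw [show (∑ σ : V → Bool, wtIsing G.edgeFinset β lam σ)
    = ∑ σ : V → Bool, ∑ S ∈ G.edgeFinset.powerset, gw G.edgeFinset β lam S σ from
    Finset.sum_congr rfl fun σ _ => (sum_gw_over_S hβ σ).symm]
  rw [Finset.sum_comm]
  refine Finset.sum_congr rfl fun S hS => ?_
  rw [sum_gw (Finset.mem_powerset.1 hS), ← B_mul_wtWRC hβ (Finset.mem_powerset.1 hS)]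

end SWProof
namespace SWProof
set_option linter.unusedSectionVars false
set_option maxHeartbeats 800000
variable {V : Type*} [Fintype V] [DecidableEq V]
variable {G : SimpleGraph V} [DecidableRel G.Adj] {β : Sym2 V → ℝ} {lam : V → ℝ}

lemma B_pos (hβ : ∀ e ∈ G.edgeFinset, 1 < β e) : 0 < ∏ e ∈ G.edgeFinset, β e :=
  Finset.prod_pos fun e he => lt_trans one_pos (hβ e he)

lemma prod_bm_pos (hβ : ∀ e ∈ G.edgeFinset, 1 < β e) {S : Finset (Sym2 V)}
    (hS : S ⊆ G.edgeFinset) : 0 < ∏ e ∈ S, (β e - 1) :=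
  Finset.prod_pos fun e he => by have := hβ e (hS he); linarith

lemma wtWRC_pos (hβ : ∀ e ∈ G.edgeFinset, 1 < β e)
    (hlam : ∀ v : V, 0 < lam v ∧ lam v ≤ 1) {S : Finset (Sym2 V)} (hS : S ⊆ G.edgeFinset) :
    0 < wtWRC G.edgeFinset (fun e => 1 - (β e)⁻¹) lam S := by
  have h1 : 0 < (∏ e ∈ S, (β e - 1)) * clusterProd S lam :=
    mul_pos (prod_bm_pos hβ hS) (clusterProd_pos hlam S)
  rw [← B_mul_wtWRC hβ hS] at h1
  by_contra hcon
  push_neg at hcon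
  have h2 := mul_nonpos_iff.2 (Or.inr ⟨hcon, (B_pos hβ).le⟩)
  rw [mul_comm] at h2
  linarith

lemma ZWRC_pos (hβ : ∀ e ∈ G.edgeFinset, 1 < β e)
    (hlam : ∀ v : V, 0 < lam v ∧ lam v ≤ 1) :
    0 < ZWRC G.edgeFinset (fun e => 1 - (β e)⁻¹) lam := by
  unfold ZWRC
  refine Finset.sum_pos (fun S hS => wtWRC_pos hβ hlam (Finset.mem_powerset.1 hS)) ?_
  exact ⟨∅, Finset.empty_mem_powerset _⟩

lemma piWRC_pos (hβ : ∀ e ∈ G.edgeFinset, 1 < β e)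
    (hlam : ∀ v : V, 0 < lam v ∧ lam v ≤ 1) {S : Finset (Sym2 V)} (hS : S ⊆ G.edgeFinset) :
    0 < piWRC G.edgeFinset (fun e => 1 - (β e)⁻¹) lam S :=
  div_pos (wtWRC_pos hβ hlam hS) (ZWRC_pos hβ hlam)

lemma sum_piWRC (hβ : ∀ e ∈ G.edgeFinset, 1 < β e)
    (hlam : ∀ v : V, 0 < lam v ∧ lam v ≤ 1) :
    ∑ S ∈ G.edgeFinset.powerset, piWRC G.edgeFinset (fun e => 1 - (β e)⁻¹) lam S = 1 := by
  unfold piWRC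
  rw [← Finset.sum_div]
  exact div_self (ne_of_gt (ZWRC_pos hβ hlam))

lemma wtIsing_pos (hβ : ∀ e ∈ G.edgeFinset, 1 < β e)
    (hlam : ∀ v : V, 0 < lam v ∧ lam v ≤ 1) (σ : V → Bool) :
    0 < wtIsing G.edgeFinset β lam σ := by
  unfold wtIsing
  refine mul_pos (Finset.prod_pos fun e he =>
    lt_trans one_pos (hβ e (mono_subset _ _ he))) (Lw_pos hlam σ)

lemma PIR_nonneg (hβ : ∀ e ∈ G.edgeFinset, 1 < β e) (σ : V → Bool) (S : Finset (Sym2 V)) :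
    0 ≤ PIR G.edgeFinset β σ S := by
  unfold PIR
  split
  · rename_i h
    refine mul_nonneg (Finset.prod_nonneg fun e he => ?_) (Finset.prod_nonneg fun e he => ?_)
    · have h1 := hβ e (mono_subset _ _ (h he))
      have h2 : (β e)⁻¹ ≤ 1 := by
        rw [inv_le_one₀ (by linarith : (0:ℝ) < β e)]; linarith
      linarith
    · have h1 := hβ e (mono_subset _ _ (Finset.mem_sdiff.1 he).1)
      positivity
  · exact le_rfl

lemma PRI_nonneg (hlam : ∀ v : V, 0 < lam v ∧ lam v ≤ 1)
    (S : Finset (Sym2 V)) (σ : V → Bool) : 0 ≤ PRI G.edgeFinset lam S σ := by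
  unfold PRI
  split
  · refine Finset.prod_nonneg fun C _ => div_nonneg ?_ ?_
    · refine Finset.prod_nonneg fun v _ => ?_
      by_cases h : σ v <;> simp [h, (hlam v).1.le]
    · have := prodlam_pos hlam C; linarith
  · exact le_rfl

/-- row sum of `PIR` over subsets -/
lemma sum_PIR (hβ : ∀ e ∈ G.edgeFinset, 1 < β e) (σ : V → Bool) :
    ∑ S ∈ G.edgeFinset.powerset, PIR G.edgeFinset β σ S = 1 := by
  unfold PIR
  have hfil : G.edgeFinset.powerset.filter (fun S => S ⊆ monoEdges G.edgeFinset σ)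
      = (monoEdges G.edgeFinset σ).powerset := by
    ext S
    simp only [Finset.mem_filter, Finset.mem_powerset]
    exact ⟨fun h => h.2, fun h => ⟨h.trans (mono_subset _ _), h⟩⟩
  rw [show (∑ S ∈ G.edgeFinset.powerset, if S ⊆ monoEdges G.edgeFinset σ then
      (∏ e ∈ S, (1 - (β e)⁻¹)) * ∏ f ∈ monoEdges G.edgeFinset σ \ S, (β f)⁻¹ else 0)
    = ∑ S ∈ G.edgeFinset.powerset.filter (fun S => S ⊆ monoEdges G.edgeFinset σ),
      ((∏ e ∈ S, (1 - (β e)⁻¹)) * ∏ f ∈ monoEdges G.edgeFinset σ \ S, (β f)⁻¹) from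
    (Finset.sum_filter _ _).symm, hfil]
  have := Finset.prod_add (fun e => 1 - (β e)⁻¹) (fun e => (β e)⁻¹) (monoEdges G.edgeFinset σ)
  simp only [sub_add_cancel, Finset.prod_const_one] at this
  rw [← this]

/-- normalized pointwise Edwards–Sokal -/
lemma pointwise_ES (hβ : ∀ e ∈ G.edgeFinset, 1 < β e)
    (hlam : ∀ v : V, 0 < lam v ∧ lam v ≤ 1) {S : Finset (Sym2 V)}
    (hS : S ⊆ G.edgeFinset) (σ : V → Bool) :
    piWRC G.edgeFinset (fun e => 1 - (β e)⁻¹) lam S * PRI G.edgeFinset lam S σ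
      = wtIsing G.edgeFinset β lam σ * PIR G.edgeFinset β σ S
        / ((∏ e ∈ G.edgeFinset, β e) * ZWRC G.edgeFinset (fun e => 1 - (β e)⁻¹) lam) := by
  rw [wtIsing_mul_PIR hβ, ← wtWRC_mul_PRI hβ hlam hS]
  unfold piWRC
  have hZ := ZWRC_pos hβ hlam
  have hB := B_pos hβ
  have hB' : (∏ e ∈ G.edgeFinset, β e) ≠ 0 := ne_of_gt hB
  rw [div_mul_eq_mul_div, mul_assoc, mul_div_mul_left _ _ hB']

def Kf (E₀ : Finset (Sym2 V)) (β : Sym2 V → ℝ) (f : Finset (Sym2 V) → ℝ) (σ : V → Bool) : ℝ :=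
  ∑ S ∈ E₀.powerset, PIR E₀ β σ S * f S

/-- Step A : Dirichlet form of the SW dynamics. -/
lemma dirichlet_SW (hβ : ∀ e ∈ G.edgeFinset, 1 < β e)
    (hlam : ∀ v : V, 0 < lam v ∧ lam v ≤ 1) (f : Finset (Sym2 V) → ℝ) :
    dirichletOn G.edgeFinset.powerset (piWRC G.edgeFinset (fun e => 1 - (β e)⁻¹) lam)
        (PSWwrc G.edgeFinset β lam) f
      = (∑ S ∈ G.edgeFinset.powerset,
          piWRC G.edgeFinset (fun e => 1 - (β e)⁻¹) lam S * f S ^ 2)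
        - ∑ σ : V → Bool, (wtIsing G.edgeFinset β lam σ
            / ((∏ e ∈ G.edgeFinset, β e) * ZWRC G.edgeFinset (fun e => 1 - (β e)⁻¹) lam))
            * (Kf G.edgeFinset β f σ) ^ 2 := by
  unfold dirichletOn
  rw [show ∑ S ∈ G.edgeFinset.powerset,
      piWRC G.edgeFinset (fun e => 1 - (β e)⁻¹) lam S * f S
        * (f S - ∑ S' ∈ G.edgeFinset.powerset, PSWwrc G.edgeFinset β lam S S' * f S')
      = (∑ S ∈ G.edgeFinset.powerset,
          piWRC G.edgeFinset (fun e => 1 - (β e)⁻¹) lam S * f S ^ 2)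
        - ∑ S ∈ G.edgeFinset.powerset,
            piWRC G.edgeFinset (fun e => 1 - (β e)⁻¹) lam S * f S
              * (∑ S' ∈ G.edgeFinset.powerset, PSWwrc G.edgeFinset β lam S S' * f S') from by
    rw [← Finset.sum_sub_distrib]
    refine Finset.sum_congr rfl fun S _ => by ring]
  congr 1
  have key : ∀ S ∈ G.edgeFinset.powerset,
      piWRC G.edgeFinset (fun e => 1 - (β e)⁻¹) lam S * f S
        * (∑ S' ∈ G.edgeFinset.powerset, PSWwrc G.edgeFinset β lam S S' * f S')
      = ∑ σ : V → Bool, (wtIsing G.edgeFinset β lam σ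
          / ((∏ e ∈ G.edgeFinset, β e) * ZWRC G.edgeFinset (fun e => 1 - (β e)⁻¹) lam))
          * PIR G.edgeFinset β σ S * f S * Kf G.edgeFinset β f σ := by
    intro S hS
    have : (∑ S' ∈ G.edgeFinset.powerset, PSWwrc G.edgeFinset β lam S S' * f S')
        = ∑ σ : V → Bool, PRI G.edgeFinset lam S σ * Kf G.edgeFinset β f σ := by
      unfold PSWwrc Kf
      rw [show (∑ S' ∈ G.edgeFinset.powerset,
          (∑ σ : V → Bool, PRI G.edgeFinset lam S σ * PIR G.edgeFinset β σ S') * f S')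
        = ∑ S' ∈ G.edgeFinset.powerset, ∑ σ : V → Bool,
            PRI G.edgeFinset lam S σ * PIR G.edgeFinset β σ S' * f S' from
        Finset.sum_congr rfl fun S' _ => Finset.sum_mul _ _ _]
      rw [Finset.sum_comm]
      refine Finset.sum_congr rfl fun σ _ => ?_
      rw [Finset.mul_sum]
      refine Finset.sum_congr rfl fun S' _ => by ring
    rw [this, Finset.mul_sum]
    refine Finset.sum_congr rfl fun σ _ => ?_
    have hES := pointwise_ES hβ hlam (Finset.mem_powerset.1 hS) σ
    calc piWRC G.edgeFinset (fun e => 1 - (β e)⁻¹) lam S * f S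
        * (PRI G.edgeFinset lam S σ * Kf G.edgeFinset β f σ)
        = (piWRC G.edgeFinset (fun e => 1 - (β e)⁻¹) lam S * PRI G.edgeFinset lam S σ)
          * f S * Kf G.edgeFinset β f σ := by ring
      _ = _ := by rw [hES]; ring
  rw [Finset.sum_congr rfl key, Finset.sum_comm]
  refine Finset.sum_congr rfl fun σ _ => ?_
  have hK : ∑ S ∈ G.edgeFinset.powerset, PIR G.edgeFinset β σ S * f S
      = Kf G.edgeFinset β f σ := rfl
  calc ∑ S ∈ G.edgeFinset.powerset, (wtIsing G.edgeFinset β lam σ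
        / ((∏ e ∈ G.edgeFinset, β e) * ZWRC G.edgeFinset (fun e => 1 - (β e)⁻¹) lam))
        * PIR G.edgeFinset β σ S * f S * Kf G.edgeFinset β f σ
      = (wtIsing G.edgeFinset β lam σ
        / ((∏ e ∈ G.edgeFinset, β e) * ZWRC G.edgeFinset (fun e => 1 - (β e)⁻¹) lam))
        * Kf G.edgeFinset β f σ * ∑ S ∈ G.edgeFinset.powerset, PIR G.edgeFinset β σ S * f S := by
        rw [Finset.mul_sum]
        exact Finset.sum_congr rfl fun S _ => by ring
    _ = _ := by rw [hK]; ring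
end SWProof
namespace SWProof
set_option linter.unusedSectionVars false
set_option maxHeartbeats 1600000
variable {V : Type*} [Fintype V] [DecidableEq V]
variable {G : SimpleGraph V} [DecidableRel G.Adj] {β : Sym2 V → ℝ} {lam : V → ℝ}

lemma symmDiff_singleton_not_mem {e : Sym2 V} {S : Finset (Sym2 V)} (h : e ∉ S) :
    symmDiff S {e} = insert e S := by
  ext x
  simp only [Finset.mem_symmDiff, Finset.mem_singleton, Finset.mem_insert]
  constructor
  · rintro (⟨hx, hne⟩ | ⟨rfl, _⟩)
    · exact Or.inr hx
    · exact Or.inl rfl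
  · rintro (rfl | hx)
    · exact Or.inr ⟨rfl, h⟩
    · exact Or.inl ⟨hx, fun hh => h (hh ▸ hx)⟩

lemma symmDiff_singleton_mem {e : Sym2 V} {S : Finset (Sym2 V)} (h : e ∉ S) :
    symmDiff (insert e S) {e} = S := by
  ext x
  simp only [Finset.mem_symmDiff, Finset.mem_singleton, Finset.mem_insert]
  constructor
  · rintro (⟨hx | hx, hne⟩ | ⟨rfl, hmem⟩)
    · exact absurd hx hne
    · exact hx
    · exact absurd (Or.inl rfl) hmem
  · intro hx
    exact Or.inl ⟨Or.inr hx, fun hh => h (hh ▸ hx)⟩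

lemma min_scaled {a b : ℝ} (ha : 0 < a) : a * min 1 (b / a) = min a b := by
  rcases le_total a b with h | h
  · rw [min_eq_left h, min_eq_left (by rw [le_div_iff₀ ha]; linarith), mul_one]
  · rw [min_eq_right h, min_eq_right (by rw [div_le_one ha]; linarith), mul_comm,
      div_mul_cancel₀ _ (ne_of_gt ha)]

/-- powerset pairing along an edge -/
lemma sum_powerset_pair {e : Sym2 V} (he : e ∈ G.edgeFinset) (F : Finset (Sym2 V) → ℝ) :
    ∑ S ∈ G.edgeFinset.powerset, F S
      = ∑ S₀ ∈ (G.edgeFinset.erase e).powerset, (F S₀ + F (insert e S₀)) := by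
  have h1 : insert e (G.edgeFinset.erase e) = G.edgeFinset := Finset.insert_erase he
  have h2 : e ∉ G.edgeFinset.erase e := Finset.notMem_erase e _
  conv_lhs => rw [← h1]
  rw [Finset.sum_powerset_insert h2, Finset.sum_add_distrib]

/-- The `y`-sum of the edge-flip kernel. -/
lemma sum_PEF_mul (hβ : ∀ e ∈ G.edgeFinset, 1 < β e)
    (hlam : ∀ v : V, 0 < lam v ∧ lam v ≤ 1) (f : Finset (Sym2 V) → ℝ)
    {x : Finset (Sym2 V)} (hx : x ∈ G.edgeFinset.powerset) :
    ∑ y ∈ G.edgeFinset.powerset,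
        PEF G.edgeFinset (piWRC G.edgeFinset (fun e => 1 - (β e)⁻¹) lam) x y * f y
      = f x - (1 / (2 * (G.edgeFinset.card : ℝ))) * ∑ e ∈ G.edgeFinset,
          min 1 (piWRC G.edgeFinset (fun e => 1 - (β e)⁻¹) lam (symmDiff x {e})
              / piWRC G.edgeFinset (fun e => 1 - (β e)⁻¹) lam x)
            * (f x - f (symmDiff x {e})) := by
  classical
  set pi := piWRC G.edgeFinset (fun e => 1 - (β e)⁻¹) lam with hpi
  have hx' : x ⊆ G.edgeFinset := Finset.mem_powerset.1 hx
  rw [← Finset.sum_erase_add _ _ hx]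
  have hdiag : PEF G.edgeFinset pi x x * f x
      = (1 - (1 / (2 * (G.edgeFinset.card : ℝ)))
          * ∑ e ∈ G.edgeFinset, min 1 (pi (symmDiff x {e}) / pi x)) * f x := by
    unfold PEF
    simp
  have himg : (G.edgeFinset.powerset.erase x).filter
        (fun y => (symmDiff x y).card = 1)
      = G.edgeFinset.image (fun e => symmDiff x {e}) := by
    ext y
    simp only [Finset.mem_filter, Finset.mem_erase, Finset.mem_powerset, Finset.mem_image]
    constructor
    · rintro ⟨⟨hyx, hy⟩, hcard⟩
      obtain ⟨a, ha⟩ := Finset.card_eq_one.1 hcard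
      refine ⟨a, ?_, ?_⟩
      · have hax : a ∈ symmDiff x y := ha ▸ Finset.mem_singleton_self a
        rw [Finset.mem_symmDiff] at hax
        rcases hax with ⟨h1, _⟩ | ⟨h1, _⟩
        · exact hx' h1
        · exact hy h1
      · rw [← ha, symmDiff_symmDiff_cancel_left]
    · rintro ⟨a, haE, rfl⟩
      have hax : symmDiff x (symmDiff x {a}) = {a} := symmDiff_symmDiff_cancel_left x {a}
      refine ⟨⟨?_, ?_⟩, by rw [hax]; exact Finset.card_singleton a⟩
      · intro hcon
        rw [hcon, symmDiff_self] at hax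
        exact absurd hax.symm (Finset.singleton_ne_empty a)
      · intro b hb
        rw [Finset.mem_symmDiff] at hb
        rcases hb with ⟨h1, _⟩ | ⟨h1, _⟩
        · exact hx' h1
        · exact (Finset.mem_singleton.1 h1) ▸ haE
  have hoff : ∑ y ∈ G.edgeFinset.powerset.erase x, PEF G.edgeFinset pi x y * f y
      = (1 / (2 * (G.edgeFinset.card : ℝ))) * ∑ e ∈ G.edgeFinset,
          min 1 (pi (symmDiff x {e}) / pi x) * f (symmDiff x {e}) := by
    have step1 : ∑ y ∈ G.edgeFinset.powerset.erase x, PEF G.edgeFinset pi x y * f y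
        = ∑ y ∈ (G.edgeFinset.powerset.erase x).filter
            (fun y => (symmDiff x y).card = 1),
            (1 / (2 * (G.edgeFinset.card : ℝ))) * min 1 (pi y / pi x) * f y := by
      rw [Finset.sum_filter]
      refine Finset.sum_congr rfl fun y hy => ?_
      have hyx : y ≠ x := (Finset.mem_erase.1 hy).1
      unfold PEF
      rw [if_neg (Ne.symm hyx)]
      by_cases h : (symmDiff x y).card = 1 <;> simp [h]
    rw [step1, himg, Finset.sum_image, Finset.mul_sum]
    · exact Finset.sum_congr rfl fun e he => by ring
    · intro a ha b hb hab
      have : symmDiff x (symmDiff x {a}) = symmDiff x (symmDiff x {b}) := congrArg (symmDiff x) hab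
      rw [symmDiff_symmDiff_cancel_left, symmDiff_symmDiff_cancel_left] at this
      exact Finset.singleton_injective this
  rw [hdiag, hoff]
  have hcomb : ∑ e ∈ G.edgeFinset,
      min 1 (pi (symmDiff x {e}) / pi x) * (f x - f (symmDiff x {e}))
      = (∑ e ∈ G.edgeFinset, min 1 (pi (symmDiff x {e}) / pi x)) * f x
        - ∑ e ∈ G.edgeFinset, min 1 (pi (symmDiff x {e}) / pi x) * f (symmDiff x {e}) := by
    rw [Finset.sum_mul, ← Finset.sum_sub_distrib]
    exact Finset.sum_congr rfl fun e _ => by ring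
  rw [hcomb]
  ring

/-- Dirichlet form of the edge-flip dynamics. -/
lemma dirichlet_EF (hβ : ∀ e ∈ G.edgeFinset, 1 < β e)
    (hlam : ∀ v : V, 0 < lam v ∧ lam v ≤ 1) (f : Finset (Sym2 V) → ℝ) :
    dirichletOn G.edgeFinset.powerset (piWRC G.edgeFinset (fun e => 1 - (β e)⁻¹) lam)
        (PEF G.edgeFinset (piWRC G.edgeFinset (fun e => 1 - (β e)⁻¹) lam)) f
      = (1 / (2 * (G.edgeFinset.card : ℝ))) * ∑ e ∈ G.edgeFinset,
          ∑ S₀ ∈ (G.edgeFinset.erase e).powerset,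
            min (piWRC G.edgeFinset (fun e => 1 - (β e)⁻¹) lam S₀)
                (piWRC G.edgeFinset (fun e => 1 - (β e)⁻¹) lam (insert e S₀))
              * (f S₀ - f (insert e S₀)) ^ 2 := by
  classical
  set pi := piWRC G.edgeFinset (fun e => 1 - (β e)⁻¹) lam with hpi
  unfold dirichletOn
  have step1 : ∀ x ∈ G.edgeFinset.powerset,
      pi x * f x * (f x - ∑ y ∈ G.edgeFinset.powerset, PEF G.edgeFinset pi x y * f y)
      = (1 / (2 * (G.edgeFinset.card : ℝ))) * ∑ e ∈ G.edgeFinset,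
          min (pi x) (pi (symmDiff x {e})) * (f x * (f x - f (symmDiff x {e}))) := by
    intro x hx
    rw [sum_PEF_mul hβ hlam f hx]
    have hpix : 0 < pi x := piWRC_pos hβ hlam (Finset.mem_powerset.1 hx)
    rw [show f x - (f x - (1 / (2 * (G.edgeFinset.card : ℝ))) * ∑ e ∈ G.edgeFinset,
        min 1 (pi (symmDiff x {e}) / pi x) * (f x - f (symmDiff x {e})))
      = (1 / (2 * (G.edgeFinset.card : ℝ))) * ∑ e ∈ G.edgeFinset,
        min 1 (pi (symmDiff x {e}) / pi x) * (f x - f (symmDiff x {e})) from by ring]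
    have hterm : ∀ e ∈ G.edgeFinset, min (pi x) (pi (symmDiff x {e}))
        * (f x * (f x - f (symmDiff x {e})))
        = pi x * f x * (min 1 (pi (symmDiff x {e}) / pi x) * (f x - f (symmDiff x {e}))) :=
      fun e _ => by rw [← min_scaled hpix]; ring
    rw [Finset.sum_congr rfl hterm, ← Finset.mul_sum]
    ring
  rw [Finset.sum_congr rfl step1, ← Finset.mul_sum, Finset.sum_comm]
  congr 1
  refine Finset.sum_congr rfl fun e he => ?_
  rw [sum_powerset_pair he]
  refine Finset.sum_congr rfl fun S₀ hS₀ => ?_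
  have he0 : e ∉ S₀ := fun hcon =>
    Finset.notMem_erase e G.edgeFinset (Finset.mem_powerset.1 hS₀ hcon)
  rw [symmDiff_singleton_not_mem he0, symmDiff_singleton_mem he0]
  rw [min_comm (pi (insert e S₀)) (pi S₀)]
  ring

end SWProof
namespace SWProof
set_option linter.unusedSectionVars false
set_option maxHeartbeats 1600000
variable {V : Type*} [Fintype V] [DecidableEq V]
variable {G : SimpleGraph V} [DecidableRel G.Adj] {β : Sym2 V → ℝ} {lam : V → ℝ}

/-- The conditional value function. -/
def Vf (E₀ : Finset (Sym2 V)) (β : Sym2 V → ℝ) (e : Sym2 V) (f : Finset (Sym2 V) → ℝ)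
    (σ : V → Bool) (S₀ : Finset (Sym2 V)) : ℝ :=
  if e ∈ monoEdges E₀ σ then (β e)⁻¹ * f S₀ + (1 - (β e)⁻¹) * f (insert e S₀) else f S₀

lemma PIR_insert_mono (hβ : ∀ e ∈ G.edgeFinset, 1 < β e) {e : Sym2 V} {S₀ : Finset (Sym2 V)}
    (he0 : e ∉ S₀) {σ : V → Bool} (hm : e ∈ monoEdges G.edgeFinset σ) :
    PIR G.edgeFinset β σ (insert e S₀) = (β e - 1) * PIR G.edgeFinset β σ S₀ := by
  unfold PIR
  by_cases h0 : S₀ ⊆ monoEdges G.edgeFinset σ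
  · have hins : insert e S₀ ⊆ monoEdges G.edgeFinset σ := Finset.insert_subset hm h0
    rw [if_pos hins, if_pos h0]
    have hbe : β e ≠ 0 := ne_of_gt (lt_trans one_pos (hβ e (mono_subset _ _ hm)))
    have hsd : monoEdges G.edgeFinset σ \ S₀
        = insert e (monoEdges G.edgeFinset σ \ insert e S₀) := by
      ext a
      simp only [Finset.mem_sdiff, Finset.mem_insert]
      constructor
      · rintro ⟨ha, hna⟩
        by_cases hae : a = e
        · exact Or.inl hae
        · exact Or.inr ⟨ha, fun h => h.elim hae hna⟩
      · rintro (rfl | ⟨ha, hna⟩)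
        · exact ⟨hm, he0⟩
        · exact ⟨ha, fun h => hna (Or.inr h)⟩
    have hnotmem : e ∉ monoEdges G.edgeFinset σ \ insert e S₀ := by
      simp [Finset.mem_sdiff]
    rw [Finset.prod_insert he0, hsd, Finset.prod_insert hnotmem]
    field_simp
  · have hins : ¬ insert e S₀ ⊆ monoEdges G.edgeFinset σ := fun h =>
      h0 (fun a ha => h (Finset.mem_insert_of_mem ha))
    rw [if_neg hins, if_neg h0, mul_zero]

lemma PIR_insert_notmono {e : Sym2 V} {S₀ : Finset (Sym2 V)}
    {σ : V → Bool} (hm : e ∉ monoEdges G.edgeFinset σ) :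
    PIR G.edgeFinset β σ (insert e S₀) = 0 := by
  unfold PIR
  rw [if_neg]
  intro h
  exact hm (h (Finset.mem_insert_self e S₀))

lemma pair_identity (hβ : ∀ e ∈ G.edgeFinset, 1 < β e) {e : Sym2 V} (he : e ∈ G.edgeFinset)
    {S₀ : Finset (Sym2 V)} (he0 : e ∉ S₀) (σ : V → Bool) (f : Finset (Sym2 V) → ℝ) :
    PIR G.edgeFinset β σ S₀ * f S₀ + PIR G.edgeFinset β σ (insert e S₀) * f (insert e S₀)
      = (PIR G.edgeFinset β σ S₀ + PIR G.edgeFinset β σ (insert e S₀))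
        * Vf G.edgeFinset β e f σ S₀ := by
  unfold Vf
  by_cases hm : e ∈ monoEdges G.edgeFinset σ
  · rw [if_pos hm, PIR_insert_mono hβ he0 hm]
    have hbe : β e ≠ 0 := ne_of_gt (lt_trans one_pos (hβ e he))
    field_simp
    ring
  · rw [if_neg hm, PIR_insert_notmono hm]
    ring

lemma Kf_decomp (hβ : ∀ e ∈ G.edgeFinset, 1 < β e) {e : Sym2 V} (he : e ∈ G.edgeFinset)
    (σ : V → Bool) (f : Finset (Sym2 V) → ℝ) :
    Kf G.edgeFinset β f σ = ∑ S₀ ∈ (G.edgeFinset.erase e).powerset,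
      (PIR G.edgeFinset β σ S₀ + PIR G.edgeFinset β σ (insert e S₀))
        * Vf G.edgeFinset β e f σ S₀ := by
  unfold Kf
  rw [sum_powerset_pair he]
  refine Finset.sum_congr rfl fun S₀ hS₀ => ?_
  have he0 : e ∉ S₀ := fun hcon =>
    Finset.notMem_erase e G.edgeFinset (Finset.mem_powerset.1 hS₀ hcon)
  exact pair_identity hβ he he0 σ f

lemma row_c (hβ : ∀ e ∈ G.edgeFinset, 1 < β e) {e : Sym2 V} (he : e ∈ G.edgeFinset)
    (σ : V → Bool) :
    ∑ S₀ ∈ (G.edgeFinset.erase e).powerset,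
      (PIR G.edgeFinset β σ S₀ + PIR G.edgeFinset β σ (insert e S₀)) = 1 := by
  rw [← sum_powerset_pair he (fun S => PIR G.edgeFinset β σ S), sum_PIR hβ σ]

lemma Kf_sq_le (hβ : ∀ e ∈ G.edgeFinset, 1 < β e) {e : Sym2 V} (he : e ∈ G.edgeFinset)
    (σ : V → Bool) (f : Finset (Sym2 V) → ℝ) :
    (Kf G.edgeFinset β f σ) ^ 2 ≤ ∑ S₀ ∈ (G.edgeFinset.erase e).powerset,
      (PIR G.edgeFinset β σ S₀ + PIR G.edgeFinset β σ (insert e S₀))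
        * (Vf G.edgeFinset β e f σ S₀) ^ 2 := by
  have hc : ∀ S₀ ∈ (G.edgeFinset.erase e).powerset,
      0 ≤ PIR G.edgeFinset β σ S₀ + PIR G.edgeFinset β σ (insert e S₀) := fun S₀ _ =>
    add_nonneg (PIR_nonneg hβ σ _) (PIR_nonneg hβ σ _)
  have hcs := Finset.sum_mul_sq_le_sq_mul_sq (G.edgeFinset.erase e).powerset
    (fun S₀ => Real.sqrt (PIR G.edgeFinset β σ S₀ + PIR G.edgeFinset β σ (insert e S₀)))
    (fun S₀ => Real.sqrt (PIR G.edgeFinset β σ S₀ + PIR G.edgeFinset β σ (insert e S₀))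
      * Vf G.edgeFinset β e f σ S₀)
  have h1 : ∑ S₀ ∈ (G.edgeFinset.erase e).powerset,
      Real.sqrt (PIR G.edgeFinset β σ S₀ + PIR G.edgeFinset β σ (insert e S₀))
        * (Real.sqrt (PIR G.edgeFinset β σ S₀ + PIR G.edgeFinset β σ (insert e S₀))
          * Vf G.edgeFinset β e f σ S₀)
      = Kf G.edgeFinset β f σ := by
    rw [Kf_decomp hβ he σ f]
    refine Finset.sum_congr rfl fun S₀ hS₀ => ?_
    rw [← mul_assoc, Real.mul_self_sqrt (hc S₀ hS₀)]
  have h2 : ∑ S₀ ∈ (G.edgeFinset.erase e).powerset,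
      (Real.sqrt (PIR G.edgeFinset β σ S₀ + PIR G.edgeFinset β σ (insert e S₀))) ^ 2 = 1 := by
    rw [← row_c hβ he σ]
    exact Finset.sum_congr rfl fun S₀ hS₀ => Real.sq_sqrt (hc S₀ hS₀)
  have h3 : ∀ S₀ ∈ (G.edgeFinset.erase e).powerset,
      (Real.sqrt (PIR G.edgeFinset β σ S₀ + PIR G.edgeFinset β σ (insert e S₀))
        * Vf G.edgeFinset β e f σ S₀) ^ 2
      = (PIR G.edgeFinset β σ S₀ + PIR G.edgeFinset β σ (insert e S₀))
        * (Vf G.edgeFinset β e f σ S₀) ^ 2 := by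
    intro S₀ hS₀
    rw [mul_pow, Real.sq_sqrt (hc S₀ hS₀)]
  rw [h1, h2, one_mul, Finset.sum_congr rfl h3] at hcs
  exact hcs

end SWProof
namespace SWProof
set_option linter.unusedSectionVars false
set_option maxHeartbeats 1600000
variable {V : Type*} [Fintype V] [DecidableEq V]
variable {G : SimpleGraph V} [DecidableRel G.Adj] {β : Sym2 V → ℝ} {lam : V → ℝ}

def alphaW (E₀ : Finset (Sym2 V)) (lam : V → ℝ) (e : Sym2 V) (S₀ : Finset (Sym2 V)) : ℝ :=
  ∑ σ : V → Bool, if insert e S₀ ⊆ monoEdges E₀ σ then Lw lam σ else 0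

def gammaW (E₀ : Finset (Sym2 V)) (lam : V → ℝ) (e : Sym2 V) (S₀ : Finset (Sym2 V)) : ℝ :=
  ∑ σ : V → Bool, if S₀ ⊆ monoEdges E₀ σ ∧ e ∉ monoEdges E₀ σ then Lw lam σ else 0

lemma alphaW_nonneg (hlam : ∀ v : V, 0 < lam v ∧ lam v ≤ 1) (e : Sym2 V)
    (S₀ : Finset (Sym2 V)) : 0 ≤ alphaW G.edgeFinset lam e S₀ :=
  Finset.sum_nonneg fun σ _ => by
    split
    · exact (Lw_pos hlam σ).le
    · exact le_rfl

lemma gammaW_nonneg (hlam : ∀ v : V, 0 < lam v ∧ lam v ≤ 1) (e : Sym2 V)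
    (S₀ : Finset (Sym2 V)) : 0 ≤ gammaW G.edgeFinset lam e S₀ :=
  Finset.sum_nonneg fun σ _ => by
    split
    · exact (Lw_pos hlam σ).le
    · exact le_rfl

/-- σ-sum of the per-edge quadratic term. -/
lemma sigma_sum_N (hβ : ∀ e ∈ G.edgeFinset, 1 < β e) {e : Sym2 V} (he : e ∈ G.edgeFinset)
    {S₀ : Finset (Sym2 V)} (he0 : e ∉ S₀) (f : Finset (Sym2 V) → ℝ) :
    ∑ σ : V → Bool, wtIsing G.edgeFinset β lam σ
        * ((PIR G.edgeFinset β σ S₀ + PIR G.edgeFinset β σ (insert e S₀))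
          * (Vf G.edgeFinset β e f σ S₀) ^ 2)
      = (∏ a ∈ S₀, (β a - 1))
        * (β e * ((β e)⁻¹ * f S₀ + (1 - (β e)⁻¹) * f (insert e S₀)) ^ 2
            * alphaW G.edgeFinset lam e S₀
          + f S₀ ^ 2 * gammaW G.edgeFinset lam e S₀) := by
  have hbe : β e ≠ 0 := ne_of_gt (lt_trans one_pos (hβ e he))
  have key : ∀ σ : V → Bool, wtIsing G.edgeFinset β lam σ
      * ((PIR G.edgeFinset β σ S₀ + PIR G.edgeFinset β σ (insert e S₀))
        * (Vf G.edgeFinset β e f σ S₀) ^ 2)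
      = (∏ a ∈ S₀, (β a - 1))
        * ((β e * ((β e)⁻¹ * f S₀ + (1 - (β e)⁻¹) * f (insert e S₀)) ^ 2)
            * (if insert e S₀ ⊆ monoEdges G.edgeFinset σ then Lw lam σ else 0)
          + f S₀ ^ 2 * (if S₀ ⊆ monoEdges G.edgeFinset σ ∧ e ∉ monoEdges G.edgeFinset σ
              then Lw lam σ else 0)) := by
    intro σ
    have hexp : wtIsing G.edgeFinset β lam σ
        * ((PIR G.edgeFinset β σ S₀ + PIR G.edgeFinset β σ (insert e S₀))
          * (Vf G.edgeFinset β e f σ S₀) ^ 2)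
        = (gw G.edgeFinset β lam S₀ σ + gw G.edgeFinset β lam (insert e S₀) σ)
          * (Vf G.edgeFinset β e f σ S₀) ^ 2 := by
      rw [← wtIsing_mul_PIR hβ σ S₀, ← wtIsing_mul_PIR hβ σ (insert e S₀)]
      ring
    rw [hexp]
    unfold gw Vf
    by_cases hm : e ∈ monoEdges G.edgeFinset σ
    · have hc5 : ¬(S₀ ⊆ monoEdges G.edgeFinset σ ∧ e ∉ monoEdges G.edgeFinset σ) :=
        fun hcon => hcon.2 hm
      by_cases h0 : S₀ ⊆ monoEdges G.edgeFinset σ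
      · have hins : insert e S₀ ⊆ monoEdges G.edgeFinset σ := Finset.insert_subset hm h0
        rw [if_pos hins, if_pos h0, if_pos hins, if_pos hm, if_neg hc5,
          Finset.prod_insert he0]
        field_simp
        ring
      · have hins : ¬ insert e S₀ ⊆ monoEdges G.edgeFinset σ := fun h =>
          h0 fun a ha => h (Finset.mem_insert_of_mem ha)
        rw [if_neg hins, if_neg h0, if_neg hins, if_neg hc5]
        ring
    · have hins : ¬ insert e S₀ ⊆ monoEdges G.edgeFinset σ := fun h =>
        hm (h (Finset.mem_insert_self e S₀))
      rw [if_neg hins, if_neg hins, if_neg hm]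
      by_cases h0 : S₀ ⊆ monoEdges G.edgeFinset σ
      · rw [if_pos h0, if_pos ⟨h0, hm⟩]
        ring
      · have hc5 : ¬(S₀ ⊆ monoEdges G.edgeFinset σ ∧ e ∉ monoEdges G.edgeFinset σ) :=
          fun hcon => h0 hcon.1
        rw [if_neg h0, if_neg hc5]
        ring
  rw [Finset.sum_congr rfl (fun σ _ => key σ)]
  rw [← Finset.mul_sum]
  congr 1
  rw [Finset.sum_add_distrib, ← Finset.mul_sum, ← Finset.mul_sum]
  rfl

/-- weight relation for `S₀`. -/
lemma w0_rel (hβ : ∀ e ∈ G.edgeFinset, 1 < β e) {e : Sym2 V} (he : e ∈ G.edgeFinset)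
    {S₀ : Finset (Sym2 V)} (hS₀ : S₀ ⊆ G.edgeFinset) :
    (∏ a ∈ G.edgeFinset, β a) * wtWRC G.edgeFinset (fun a => 1 - (β a)⁻¹) lam S₀
      = (∏ a ∈ S₀, (β a - 1))
        * (alphaW G.edgeFinset lam e S₀ + gammaW G.edgeFinset lam e S₀) := by
  rw [B_mul_wtWRC hβ hS₀, ← sum_gw hS₀]
  unfold gw alphaW gammaW
  rw [← Finset.sum_add_distrib, Finset.mul_sum]
  refine Finset.sum_congr rfl fun σ _ => ?_
  by_cases hm : e ∈ monoEdges G.edgeFinset σ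
  · have hc5 : ¬(S₀ ⊆ monoEdges G.edgeFinset σ ∧ e ∉ monoEdges G.edgeFinset σ) :=
      fun hcon => hcon.2 hm
    by_cases h0 : S₀ ⊆ monoEdges G.edgeFinset σ
    · rw [if_pos h0, if_pos (Finset.insert_subset hm h0), if_neg hc5]
      ring
    · have hins : ¬ insert e S₀ ⊆ monoEdges G.edgeFinset σ := fun h =>
        h0 fun a ha => h (Finset.mem_insert_of_mem ha)
      rw [if_neg h0, if_neg hins, if_neg hc5]
      ring
  · have hins : ¬ insert e S₀ ⊆ monoEdges G.edgeFinset σ := fun h =>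
      hm (h (Finset.mem_insert_self e S₀))
    by_cases h0 : S₀ ⊆ monoEdges G.edgeFinset σ
    · rw [if_pos h0, if_neg hins, if_pos ⟨h0, hm⟩]
      ring
    · have hc5 : ¬(S₀ ⊆ monoEdges G.edgeFinset σ ∧ e ∉ monoEdges G.edgeFinset σ) :=
        fun hcon => h0 hcon.1
      rw [if_neg h0, if_neg hins, if_neg hc5]
      ring

/-- weight relation for `insert e S₀`. -/
lemma w1_rel (hβ : ∀ e ∈ G.edgeFinset, 1 < β e) {e : Sym2 V} (he : e ∈ G.edgeFinset)
    {S₀ : Finset (Sym2 V)} (hS₀ : S₀ ⊆ G.edgeFinset) (he0 : e ∉ S₀) :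
    (∏ a ∈ G.edgeFinset, β a)
        * wtWRC G.edgeFinset (fun a => 1 - (β a)⁻¹) lam (insert e S₀)
      = (∏ a ∈ S₀, (β a - 1)) * (β e - 1) * alphaW G.edgeFinset lam e S₀ := by
  have hins : insert e S₀ ⊆ G.edgeFinset := Finset.insert_subset he hS₀
  rw [B_mul_wtWRC hβ hins, ← sum_gw hins]
  unfold gw alphaW
  rw [Finset.mul_sum]
  refine Finset.sum_congr rfl fun σ _ => ?_
  rw [Finset.prod_insert he0]
  by_cases h : insert e S₀ ⊆ monoEdges G.edgeFinset σ
  · rw [if_pos h, if_pos h]; ring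
  · rw [if_neg h, if_neg h]; ring

/-- the scalar inequality behind the factor 3. -/
lemma scalar_min (b al ga : ℝ) (hb : 1 < b) (hal : 0 ≤ al) (hga : 0 ≤ ga)
    (h2 : ga ≤ 2 * al) :
    min (al + ga) ((b - 1) * al) * b ≤ 6 * (al * (b - 1)) := by
  have hb0 : (0:ℝ) < b := lt_trans one_pos hb
  rcases le_total b 2 with hb2 | hb2
  · have hm := min_le_right (al + ga) ((b - 1) * al)
    have h1 : min (al + ga) ((b - 1) * al) * b ≤ ((b - 1) * al) * b :=
      mul_le_mul_of_nonneg_right hm hb0.le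
    nlinarith [mul_nonneg (mul_nonneg hal (by linarith : (0:ℝ) ≤ b - 1))
      (by linarith : (0:ℝ) ≤ 6 - b)]
  · have hm := min_le_left (al + ga) ((b - 1) * al)
    have h1 : min (al + ga) ((b - 1) * al) * b ≤ (al + ga) * b :=
      mul_le_mul_of_nonneg_right hm hb0.le
    nlinarith [mul_nonneg (by linarith : (0:ℝ) ≤ 2 * al - ga) hb0.le,
      mul_nonneg hal (by linarith : (0:ℝ) ≤ b - 2)]

end SWProof
namespace SWProof
set_option linter.unusedSectionVars false
set_option maxHeartbeats 1600000
variable {V : Type*} [Fintype V] [DecidableEq V]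
variable {G : SimpleGraph V} [DecidableRel G.Adj] {β : Sym2 V → ℝ} {lam : V → ℝ}

lemma compOf_closed {S₀ : Finset (Sym2 V)} {u x y : V} (hx : x ∈ compOf S₀ u)
    (hr : (SimpleGraph.fromEdgeSet (↑S₀ : Set (Sym2 V))).Reachable x y) :
    y ∈ compOf S₀ u :=
  mem_compOf.2 ((mem_compOf.1 hx).trans hr)

lemma flip_half (hlam : ∀ v : V, 0 < lam v ∧ lam v ≤ 1) {u v : V}
    (huv : s(u, v) ∈ G.edgeFinset) {S₀ : Finset (Sym2 V)} (hS₀ : S₀ ⊆ G.edgeFinset) :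
    ∑ σ ∈ Finset.univ.filter (fun σ : V → Bool =>
        (S₀ ⊆ monoEdges G.edgeFinset σ ∧ s(u, v) ∉ monoEdges G.edgeFinset σ) ∧ σ u = true),
      Lw lam σ
      ≤ ∑ σ ∈ Finset.univ.filter (fun σ : V → Bool =>
          insert s(u, v) S₀ ⊆ monoEdges G.edgeFinset σ), Lw lam σ := by
  classical
  set Φ : (V → Bool) → (V → Bool) := fun σ x => if x ∈ compOf S₀ u then false else σ x with hΦ
  set Γt := Finset.univ.filter (fun σ : V → Bool =>
    (S₀ ⊆ monoEdges G.edgeFinset σ ∧ s(u, v) ∉ monoEdges G.edgeFinset σ) ∧ σ u = true)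
    with hΓt
  set A := Finset.univ.filter (fun σ : V → Bool =>
    insert s(u, v) S₀ ⊆ monoEdges G.edgeFinset σ) with hA
  have hmemΓ : ∀ σ ∈ Γt, (S₀ ⊆ monoEdges G.edgeFinset σ
      ∧ s(u, v) ∉ monoEdges G.edgeFinset σ) ∧ σ u = true := by
    intro σ hσ
    rw [hΓt, Finset.mem_filter] at hσ
    exact hσ.2
  have hsigv : ∀ σ ∈ Γt, σ v = false := by
    intro σ hσ
    obtain ⟨⟨h1, h2⟩, h3⟩ := hmemΓ σ hσ
    cases hb : σ v
    · rfl
    · exact absurd (mem_monoEdges.2 ⟨huv, by rw [h3, hb]⟩) h2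
  have hvnot : ∀ σ ∈ Γt, v ∉ compOf S₀ u := by
    intro σ hσ hv
    obtain ⟨⟨h1, h2⟩, h3⟩ := hmemΓ σ hσ
    have hconst := (subset_mono_iff_const hS₀ σ).1 h1
    have : σ u = σ v := hconst u v (mem_compOf.1 hv)
    rw [h3, hsigv σ hσ] at this
    simp at this
  have hconst_comp : ∀ σ ∈ Γt, ∀ x ∈ compOf S₀ u, σ x = true := by
    intro σ hσ x hx
    obtain ⟨⟨h1, h2⟩, h3⟩ := hmemΓ σ hσ
    have hconst := (subset_mono_iff_const hS₀ σ).1 h1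
    rw [← h3]
    exact (hconst u x (mem_compOf.1 hx)).symm
  have hmaps : ∀ σ ∈ Γt, Φ σ ∈ A := by
    intro σ hσ
    obtain ⟨⟨h1, h2⟩, h3⟩ := hmemΓ σ hσ
    have hconst := (subset_mono_iff_const hS₀ σ).1 h1
    rw [hA, Finset.mem_filter]
    refine ⟨Finset.mem_univ _, ?_⟩
    refine Finset.insert_subset ?_ ?_
    · refine mem_monoEdges.2 ⟨huv, ?_⟩
      have hu : Φ σ u = false := by
        simp only [hΦ]
        rw [if_pos (self_mem_compOf S₀ u)]
      have hv : Φ σ v = false := by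
        simp only [hΦ]
        rw [if_neg (hvnot σ hσ)]
        exact hsigv σ hσ
      rw [hu, hv]
    · refine (subset_mono_iff_const hS₀ (Φ σ)).2 ?_
      intro x y hr
      by_cases hx : x ∈ compOf S₀ u
      · have hy : y ∈ compOf S₀ u := compOf_closed hx hr
        simp only [hΦ]
        rw [if_pos hx, if_pos hy]
      · have hy : y ∉ compOf S₀ u := fun hy => hx (compOf_closed hy hr.symm)
        simp only [hΦ]
        rw [if_neg hx, if_neg hy]
        exact hconst x y hr
  have hLw : ∀ σ ∈ Γt, Lw lam σ ≤ Lw lam (Φ σ) := by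
    intro σ hσ
    unfold Lw
    refine Finset.prod_le_prod (fun x _ => ?_) (fun x _ => ?_)
    · by_cases h : σ x <;> simp [h, (hlam x).1.le]
    · by_cases hx : x ∈ compOf S₀ u
      · have : σ x = true := hconst_comp σ hσ x hx
        simp only [hΦ]
        rw [if_pos hx, this]
        simp [(hlam x).2]
      · simp only [hΦ]
        rw [if_neg hx]
  have hinj : ∀ σ₁ ∈ Γt, ∀ σ₂ ∈ Γt, Φ σ₁ = Φ σ₂ → σ₁ = σ₂ := by
    intro σ₁ h₁ σ₂ h₂ heq
    funext x
    by_cases hx : x ∈ compOf S₀ u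
    · rw [hconst_comp σ₁ h₁ x hx, hconst_comp σ₂ h₂ x hx]
    · have := congrFun heq x
      simp only [hΦ] at this
      rw [if_neg hx, if_neg hx] at this
      exact this
  calc ∑ σ ∈ Γt, Lw lam σ ≤ ∑ σ ∈ Γt, Lw lam (Φ σ) := Finset.sum_le_sum hLw
    _ = ∑ σ ∈ Γt.image Φ, Lw lam σ := (Finset.sum_image hinj).symm
    _ ≤ ∑ σ ∈ A, Lw lam σ := by
        refine Finset.sum_le_sum_of_subset_of_nonneg ?_ (fun σ _ _ => (Lw_pos hlam σ).le)
        intro σ hσ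
        obtain ⟨σ₀, hσ₀, rfl⟩ := Finset.mem_image.1 hσ
        exact hmaps σ₀ hσ₀

lemma gamma_le_two_alpha (hlam : ∀ v : V, 0 < lam v ∧ lam v ≤ 1) {u v : V}
    (huv : s(u, v) ∈ G.edgeFinset) {S₀ : Finset (Sym2 V)} (hS₀ : S₀ ⊆ G.edgeFinset) :
    gammaW G.edgeFinset lam s(u, v) S₀ ≤ 2 * alphaW G.edgeFinset lam s(u, v) S₀ := by
  classical
  have hgam : gammaW G.edgeFinset lam s(u, v) S₀
      = ∑ σ ∈ Finset.univ.filter (fun σ : V → Bool =>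
          S₀ ⊆ monoEdges G.edgeFinset σ ∧ s(u, v) ∉ monoEdges G.edgeFinset σ), Lw lam σ := by
    unfold gammaW
    rw [Finset.sum_filter]
  have halp : alphaW G.edgeFinset lam s(u, v) S₀
      = ∑ σ ∈ Finset.univ.filter (fun σ : V → Bool =>
          insert s(u, v) S₀ ⊆ monoEdges G.edgeFinset σ), Lw lam σ := by
    unfold alphaW
    rw [Finset.sum_filter]
  set P := fun σ : V → Bool =>
    S₀ ⊆ monoEdges G.edgeFinset σ ∧ s(u, v) ∉ monoEdges G.edgeFinset σ with hP
  have hsplit := Finset.sum_filter_add_sum_filter_not (Finset.univ.filter P)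
    (fun σ => σ u = true) (Lw lam)
  have hfil1 : (Finset.univ.filter P).filter (fun σ => σ u = true)
      = Finset.univ.filter (fun σ : V → Bool => P σ ∧ σ u = true) := by
    rw [Finset.filter_filter]
  have hfil2 : (Finset.univ.filter P).filter (fun σ => ¬ (σ u = true))
      = Finset.univ.filter (fun σ : V → Bool => P σ ∧ σ v = true) := by
    rw [Finset.filter_filter]
    refine Finset.filter_congr fun σ _ => ?_
    constructor
    · rintro ⟨hPσ, hnu⟩
      refine ⟨hPσ, ?_⟩
      cases hb : σ v
      · exfalso
        apply hPσ.2
        refine mem_monoEdges.2 ⟨huv, ?_⟩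
        rw [hb]
        cases hbu : σ u
        · rfl
        · exact absurd hbu hnu
      · rfl
    · rintro ⟨hPσ, hv⟩
      refine ⟨hPσ, fun hu => hPσ.2 (mem_monoEdges.2 ⟨huv, by rw [hu, hv]⟩)⟩
  have h1 : ∑ σ ∈ Finset.univ.filter (fun σ : V → Bool => P σ ∧ σ u = true), Lw lam σ
      ≤ alphaW G.edgeFinset lam s(u, v) S₀ := by
    rw [halp]
    exact flip_half hlam huv hS₀
  have h2 : ∑ σ ∈ Finset.univ.filter (fun σ : V → Bool => P σ ∧ σ v = true), Lw lam σ
      ≤ alphaW G.edgeFinset lam s(u, v) S₀ := by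
    have hvu : s(v, u) ∈ G.edgeFinset := by rw [Sym2.eq_swap]; exact huv
    have := flip_half hlam hvu hS₀
    rw [Sym2.eq_swap (a := v) (b := u)] at this
    rw [halp]
    refine le_trans (le_of_eq ?_) this
    refine Finset.sum_congr ?_ fun _ _ => rfl
    refine Finset.filter_congr fun σ _ => ?_
    constructor
    · rintro ⟨hPσ, hv⟩
      exact ⟨⟨hPσ.1, hPσ.2⟩, hv⟩
    · rintro ⟨hPσ, hv⟩
      exact ⟨⟨hPσ.1, hPσ.2⟩, hv⟩
  rw [hgam, ← hsplit, hfil1, hfil2]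
  linarith

end SWProof
namespace SWProof
set_option linter.unusedSectionVars false
set_option maxHeartbeats 3200000
variable {V : Type*} [Fintype V] [DecidableEq V]
variable {G : SimpleGraph V} [DecidableRel G.Adj] {β : Sym2 V → ℝ} {lam : V → ℝ}

lemma min_mul_nonneg {c a b : ℝ} (hc : 0 ≤ c) : c * min a b = min (c * a) (c * b) :=
  (monotone_mul_left_of_nonneg hc).map_min

lemma per_S0_scalar (b κ al ga f₀ f₁ : ℝ) (hb : 1 < b) (hκ : 0 ≤ κ) (hal : 0 ≤ al)
    (hga : 0 ≤ ga) (h2 : ga ≤ 2 * al) :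
    min (κ * (al + ga)) (κ * (b - 1) * al) * (f₀ - f₁) ^ 2
      ≤ 6 * (κ * (al + ga) * f₀ ^ 2 + κ * (b - 1) * al * f₁ ^ 2
          - κ * (b * (b⁻¹ * f₀ + (1 - b⁻¹) * f₁) ^ 2 * al + f₀ ^ 2 * ga)) := by
  have hb0 : (0:ℝ) < b := lt_trans one_pos hb
  have hident : κ * (al + ga) * f₀ ^ 2 + κ * (b - 1) * al * f₁ ^ 2
      - κ * (b * (b⁻¹ * f₀ + (1 - b⁻¹) * f₁) ^ 2 * al + f₀ ^ 2 * ga)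
      = κ * al * ((b - 1) / b) * (f₀ - f₁) ^ 2 := by
    field_simp
    ring
  rw [hident]
  have hmin : min (κ * (al + ga)) (κ * (b - 1) * al) = κ * min (al + ga) ((b - 1) * al) := by
    rw [min_mul_nonneg hκ, mul_assoc]
  rw [hmin]
  have hmin2 : min (al + ga) ((b - 1) * al) ≤ 6 * (al * (b - 1)) / b :=
    (le_div_iff₀ hb0).2 (scalar_min b al ga hb hal hga h2)
  calc κ * min (al + ga) ((b - 1) * al) * (f₀ - f₁) ^ 2
      ≤ κ * (6 * (al * (b - 1)) / b) * (f₀ - f₁) ^ 2 :=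
        mul_le_mul_of_nonneg_right (mul_le_mul_of_nonneg_left hmin2 hκ) (sq_nonneg _)
    _ = 6 * (κ * al * ((b - 1) / b) * (f₀ - f₁) ^ 2) := by ring

/-- the per-pair core inequality (unnormalized, multiplied by `B`). -/
lemma per_S0 (hβ : ∀ e ∈ G.edgeFinset, 1 < β e) (hlam : ∀ v : V, 0 < lam v ∧ lam v ≤ 1)
    {e : Sym2 V} (he : e ∈ G.edgeFinset) {S₀ : Finset (Sym2 V)} (hS₀ : S₀ ⊆ G.edgeFinset)
    (he0 : e ∉ S₀)
    (hga : gammaW G.edgeFinset lam e S₀ ≤ 2 * alphaW G.edgeFinset lam e S₀)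
    (f : Finset (Sym2 V) → ℝ) :
    (∏ a ∈ G.edgeFinset, β a)
        * (min (wtWRC G.edgeFinset (fun a => 1 - (β a)⁻¹) lam S₀)
            (wtWRC G.edgeFinset (fun a => 1 - (β a)⁻¹) lam (insert e S₀))
          * (f S₀ - f (insert e S₀)) ^ 2)
      ≤ 6 * (((∏ a ∈ G.edgeFinset, β a)
            * wtWRC G.edgeFinset (fun a => 1 - (β a)⁻¹) lam S₀) * f S₀ ^ 2
          + ((∏ a ∈ G.edgeFinset, β a)
            * wtWRC G.edgeFinset (fun a => 1 - (β a)⁻¹) lam (insert e S₀))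
            * f (insert e S₀) ^ 2
          - ∑ σ : V → Bool, wtIsing G.edgeFinset β lam σ
              * ((PIR G.edgeFinset β σ S₀ + PIR G.edgeFinset β σ (insert e S₀))
                * (Vf G.edgeFinset β e f σ S₀) ^ 2)) := by
  have hBpos := B_pos hβ
  rw [show (∏ a ∈ G.edgeFinset, β a)
      * (min (wtWRC G.edgeFinset (fun a => 1 - (β a)⁻¹) lam S₀)
          (wtWRC G.edgeFinset (fun a => 1 - (β a)⁻¹) lam (insert e S₀))
        * (f S₀ - f (insert e S₀)) ^ 2)
    = min ((∏ a ∈ G.edgeFinset, β a) * wtWRC G.edgeFinset (fun a => 1 - (β a)⁻¹) lam S₀)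
        ((∏ a ∈ G.edgeFinset, β a)
          * wtWRC G.edgeFinset (fun a => 1 - (β a)⁻¹) lam (insert e S₀))
        * (f S₀ - f (insert e S₀)) ^ 2
    from by rw [← min_mul_nonneg hBpos.le]; ring]
  rw [w0_rel (lam := lam) hβ he hS₀, w1_rel (lam := lam) hβ he hS₀ he0,
    sigma_sum_N (lam := lam) hβ he he0 f]
  exact per_S0_scalar (β e) _ _ _ _ _ (hβ e he) (prod_bm_pos hβ hS₀).le
    (alphaW_nonneg hlam e S₀) (gammaW_nonneg hlam e S₀) hga

end SWProof
namespace SWProof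
set_option linter.unusedSectionVars false
set_option maxHeartbeats 3200000
variable {V : Type*} [Fintype V] [DecidableEq V]
variable {G : SimpleGraph V} [DecidableRel G.Adj] {β : Sym2 V → ℝ} {lam : V → ℝ}

lemma per_edge (hβ : ∀ e ∈ G.edgeFinset, 1 < β e) (hlam : ∀ v : V, 0 < lam v ∧ lam v ≤ 1)
    {e : Sym2 V} (he : e ∈ G.edgeFinset) (f : Finset (Sym2 V) → ℝ) :
    ∑ S₀ ∈ (G.edgeFinset.erase e).powerset,
        min (piWRC G.edgeFinset (fun a => 1 - (β a)⁻¹) lam S₀)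
            (piWRC G.edgeFinset (fun a => 1 - (β a)⁻¹) lam (insert e S₀))
          * (f S₀ - f (insert e S₀)) ^ 2
      ≤ 6 * dirichletOn G.edgeFinset.powerset
          (piWRC G.edgeFinset (fun a => 1 - (β a)⁻¹) lam) (PSWwrc G.edgeFinset β lam) f := by
  classical
  revert he
  induction e using Sym2.ind with
  | _ u v =>
  intro he
  have hB := B_pos hβ
  have hZ := ZWRC_pos (lam := lam) hβ hlam
  -- step: summed per-pair inequality
  have hfacts : ∀ S₀ ∈ (G.edgeFinset.erase s(u, v)).powerset,
      S₀ ⊆ G.edgeFinset ∧ s(u, v) ∉ S₀ := by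
    intro S₀ hS₀
    have h1 := Finset.mem_powerset.1 hS₀
    exact ⟨h1.trans (Finset.erase_subset _ _),
      fun hcon => Finset.notMem_erase _ _ (h1 hcon)⟩
  have hstep : ∑ S₀ ∈ (G.edgeFinset.erase s(u, v)).powerset,
      (∏ a ∈ G.edgeFinset, β a)
        * (min (wtWRC G.edgeFinset (fun a => 1 - (β a)⁻¹) lam S₀)
            (wtWRC G.edgeFinset (fun a => 1 - (β a)⁻¹) lam (insert s(u, v) S₀))
          * (f S₀ - f (insert s(u, v) S₀)) ^ 2)
      ≤ ∑ S₀ ∈ (G.edgeFinset.erase s(u, v)).powerset,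
        6 * (((∏ a ∈ G.edgeFinset, β a)
            * wtWRC G.edgeFinset (fun a => 1 - (β a)⁻¹) lam S₀) * f S₀ ^ 2
          + ((∏ a ∈ G.edgeFinset, β a)
            * wtWRC G.edgeFinset (fun a => 1 - (β a)⁻¹) lam (insert s(u, v) S₀))
            * f (insert s(u, v) S₀) ^ 2
          - ∑ σ : V → Bool, wtIsing G.edgeFinset β lam σ
              * ((PIR G.edgeFinset β σ S₀ + PIR G.edgeFinset β σ (insert s(u, v) S₀))
                * (Vf G.edgeFinset β s(u, v) f σ S₀) ^ 2)) := by
    refine Finset.sum_le_sum fun S₀ hS₀ => ?_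
    obtain ⟨h1, h2⟩ := hfacts S₀ hS₀
    exact per_S0 hβ hlam he h1 h2 (gamma_le_two_alpha hlam he h1) f
  -- rewrite the RHS of hstep
  have hpair : ∑ S₀ ∈ (G.edgeFinset.erase s(u, v)).powerset,
      (wtWRC G.edgeFinset (fun a => 1 - (β a)⁻¹) lam S₀ * f S₀ ^ 2
        + wtWRC G.edgeFinset (fun a => 1 - (β a)⁻¹) lam (insert s(u, v) S₀)
          * f (insert s(u, v) S₀) ^ 2)
      = ∑ S ∈ G.edgeFinset.powerset,
          wtWRC G.edgeFinset (fun a => 1 - (β a)⁻¹) lam S * f S ^ 2 :=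
    (sum_powerset_pair he fun S =>
      wtWRC G.edgeFinset (fun a => 1 - (β a)⁻¹) lam S * f S ^ 2).symm
  -- Cauchy-Schwarz bound
  have hCS : ∑ σ : V → Bool, wtIsing G.edgeFinset β lam σ * (Kf G.edgeFinset β f σ) ^ 2
      ≤ ∑ S₀ ∈ (G.edgeFinset.erase s(u, v)).powerset,
        ∑ σ : V → Bool, wtIsing G.edgeFinset β lam σ
          * ((PIR G.edgeFinset β σ S₀ + PIR G.edgeFinset β σ (insert s(u, v) S₀))
            * (Vf G.edgeFinset β s(u, v) f σ S₀) ^ 2) := by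
    rw [Finset.sum_comm]
    refine Finset.sum_le_sum fun σ _ => ?_
    rw [← Finset.mul_sum]
    exact mul_le_mul_of_nonneg_left (Kf_sq_le hβ he σ f) (wtIsing_pos hβ hlam σ).le
  have hD := dirichlet_SW (lam := lam) hβ hlam f
  -- identities to remove normalizations
  have hZπ : ∀ S : Finset (Sym2 V),
      ZWRC G.edgeFinset (fun a => 1 - (β a)⁻¹) lam
        * piWRC G.edgeFinset (fun a => 1 - (β a)⁻¹) lam S
      = wtWRC G.edgeFinset (fun a => 1 - (β a)⁻¹) lam S := fun S => by
    unfold piWRC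
    rw [mul_comm, div_mul_cancel₀ _ (ne_of_gt hZ)]
  have hnorm1 : (∏ a ∈ G.edgeFinset, β a) * ZWRC G.edgeFinset (fun a => 1 - (β a)⁻¹) lam
      * ∑ S ∈ G.edgeFinset.powerset,
          piWRC G.edgeFinset (fun a => 1 - (β a)⁻¹) lam S * f S ^ 2
      = (∏ a ∈ G.edgeFinset, β a) * ∑ S ∈ G.edgeFinset.powerset,
          wtWRC G.edgeFinset (fun a => 1 - (β a)⁻¹) lam S * f S ^ 2 := by
    rw [Finset.mul_sum, Finset.mul_sum]
    refine Finset.sum_congr rfl fun S _ => ?_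
    rw [show (∏ a ∈ G.edgeFinset, β a) * ZWRC G.edgeFinset (fun a => 1 - (β a)⁻¹) lam
        * (piWRC G.edgeFinset (fun a => 1 - (β a)⁻¹) lam S * f S ^ 2)
      = (∏ a ∈ G.edgeFinset, β a) * (ZWRC G.edgeFinset (fun a => 1 - (β a)⁻¹) lam
        * piWRC G.edgeFinset (fun a => 1 - (β a)⁻¹) lam S) * f S ^ 2 from by ring, hZπ S,
      mul_assoc]
  have hnorm2 : (∏ a ∈ G.edgeFinset, β a) * ZWRC G.edgeFinset (fun a => 1 - (β a)⁻¹) lam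
      * ∑ σ : V → Bool, (wtIsing G.edgeFinset β lam σ
          / ((∏ a ∈ G.edgeFinset, β a) * ZWRC G.edgeFinset (fun a => 1 - (β a)⁻¹) lam))
          * (Kf G.edgeFinset β f σ) ^ 2
      = ∑ σ : V → Bool, wtIsing G.edgeFinset β lam σ * (Kf G.edgeFinset β f σ) ^ 2 := by
    rw [Finset.mul_sum]
    refine Finset.sum_congr rfl fun σ _ => ?_
    have hBZ : (∏ a ∈ G.edgeFinset, β a)
        * ZWRC G.edgeFinset (fun a => 1 - (β a)⁻¹) lam ≠ 0 :=
      ne_of_gt (mul_pos hB hZ)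
    rw [show (∏ a ∈ G.edgeFinset, β a) * ZWRC G.edgeFinset (fun a => 1 - (β a)⁻¹) lam
        * (wtIsing G.edgeFinset β lam σ / ((∏ a ∈ G.edgeFinset, β a)
          * ZWRC G.edgeFinset (fun a => 1 - (β a)⁻¹) lam) * (Kf G.edgeFinset β f σ) ^ 2)
      = wtIsing G.edgeFinset β lam σ / ((∏ a ∈ G.edgeFinset, β a)
          * ZWRC G.edgeFinset (fun a => 1 - (β a)⁻¹) lam)
        * ((∏ a ∈ G.edgeFinset, β a) * ZWRC G.edgeFinset (fun a => 1 - (β a)⁻¹) lam)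
        * (Kf G.edgeFinset β f σ) ^ 2 from by ring, div_mul_cancel₀ _ hBZ]
  -- put together : B * SB ≤ 6 * B * Z * D
  have hmain : (∏ a ∈ G.edgeFinset, β a) * ∑ S₀ ∈ (G.edgeFinset.erase s(u, v)).powerset,
      min (wtWRC G.edgeFinset (fun a => 1 - (β a)⁻¹) lam S₀)
          (wtWRC G.edgeFinset (fun a => 1 - (β a)⁻¹) lam (insert s(u, v) S₀))
        * (f S₀ - f (insert s(u, v) S₀)) ^ 2
      ≤ 6 * ((∏ a ∈ G.edgeFinset, β a) * ZWRC G.edgeFinset (fun a => 1 - (β a)⁻¹) lam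
          * dirichletOn G.edgeFinset.powerset
            (piWRC G.edgeFinset (fun a => 1 - (β a)⁻¹) lam) (PSWwrc G.edgeFinset β lam) f) := by
    rw [Finset.mul_sum]
    have hrhs : ∑ S₀ ∈ (G.edgeFinset.erase s(u, v)).powerset,
        6 * (((∏ a ∈ G.edgeFinset, β a)
            * wtWRC G.edgeFinset (fun a => 1 - (β a)⁻¹) lam S₀) * f S₀ ^ 2
          + ((∏ a ∈ G.edgeFinset, β a)
            * wtWRC G.edgeFinset (fun a => 1 - (β a)⁻¹) lam (insert s(u, v) S₀))
            * f (insert s(u, v) S₀) ^ 2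
          - ∑ σ : V → Bool, wtIsing G.edgeFinset β lam σ
              * ((PIR G.edgeFinset β σ S₀ + PIR G.edgeFinset β σ (insert s(u, v) S₀))
                * (Vf G.edgeFinset β s(u, v) f σ S₀) ^ 2))
        = 6 * ((∏ a ∈ G.edgeFinset, β a) * ∑ S ∈ G.edgeFinset.powerset,
            wtWRC G.edgeFinset (fun a => 1 - (β a)⁻¹) lam S * f S ^ 2
          - ∑ S₀ ∈ (G.edgeFinset.erase s(u, v)).powerset,
              ∑ σ : V → Bool, wtIsing G.edgeFinset β lam σ
                * ((PIR G.edgeFinset β σ S₀ + PIR G.edgeFinset β σ (insert s(u, v) S₀))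
                  * (Vf G.edgeFinset β s(u, v) f σ S₀) ^ 2)) := by
      rw [← hpair, Finset.mul_sum, ← Finset.sum_sub_distrib, Finset.mul_sum]
      exact Finset.sum_congr rfl fun S₀ _ => by ring
    have h1 := le_trans hstep (le_of_eq hrhs)
    have h2 : 6 * ((∏ a ∈ G.edgeFinset, β a) * ∑ S ∈ G.edgeFinset.powerset,
            wtWRC G.edgeFinset (fun a => 1 - (β a)⁻¹) lam S * f S ^ 2
          - ∑ S₀ ∈ (G.edgeFinset.erase s(u, v)).powerset,
              ∑ σ : V → Bool, wtIsing G.edgeFinset β lam σ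
                * ((PIR G.edgeFinset β σ S₀ + PIR G.edgeFinset β σ (insert s(u, v) S₀))
                  * (Vf G.edgeFinset β s(u, v) f σ S₀) ^ 2))
        ≤ 6 * ((∏ a ∈ G.edgeFinset, β a) * ZWRC G.edgeFinset (fun a => 1 - (β a)⁻¹) lam
          * dirichletOn G.edgeFinset.powerset
            (piWRC G.edgeFinset (fun a => 1 - (β a)⁻¹) lam) (PSWwrc G.edgeFinset β lam) f) := by
      have hDmul : (∏ a ∈ G.edgeFinset, β a) * ZWRC G.edgeFinset (fun a => 1 - (β a)⁻¹) lam
          * dirichletOn G.edgeFinset.powerset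
            (piWRC G.edgeFinset (fun a => 1 - (β a)⁻¹) lam) (PSWwrc G.edgeFinset β lam) f
          = (∏ a ∈ G.edgeFinset, β a) * ∑ S ∈ G.edgeFinset.powerset,
              wtWRC G.edgeFinset (fun a => 1 - (β a)⁻¹) lam S * f S ^ 2
            - ∑ σ : V → Bool, wtIsing G.edgeFinset β lam σ * (Kf G.edgeFinset β f σ) ^ 2 := by
        rw [hD, mul_sub, hnorm1, hnorm2]
      rw [hDmul]
      linarith [hCS]
    exact le_trans h1 h2
  -- divide by B and Z
  have hcast : ∀ S₀ : Finset (Sym2 V),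
      min (piWRC G.edgeFinset (fun a => 1 - (β a)⁻¹) lam S₀)
          (piWRC G.edgeFinset (fun a => 1 - (β a)⁻¹) lam (insert s(u, v) S₀))
      = min (wtWRC G.edgeFinset (fun a => 1 - (β a)⁻¹) lam S₀)
          (wtWRC G.edgeFinset (fun a => 1 - (β a)⁻¹) lam (insert s(u, v) S₀))
        / ZWRC G.edgeFinset (fun a => 1 - (β a)⁻¹) lam := by
    intro S₀
    unfold piWRC
    rw [div_eq_mul_inv, div_eq_mul_inv, div_eq_mul_inv, mul_comm
      (wtWRC G.edgeFinset (fun a => 1 - (β a)⁻¹) lam S₀), mul_comm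
      (wtWRC G.edgeFinset (fun a => 1 - (β a)⁻¹) lam (insert s(u, v) S₀)), mul_comm
      (min (wtWRC G.edgeFinset (fun a => 1 - (β a)⁻¹) lam S₀)
        (wtWRC G.edgeFinset (fun a => 1 - (β a)⁻¹) lam (insert s(u, v) S₀))),
      ← min_mul_nonneg (inv_nonneg.2 hZ.le)]
  rw [show ∑ S₀ ∈ (G.edgeFinset.erase s(u, v)).powerset,
      min (piWRC G.edgeFinset (fun a => 1 - (β a)⁻¹) lam S₀)
          (piWRC G.edgeFinset (fun a => 1 - (β a)⁻¹) lam (insert s(u, v) S₀))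
        * (f S₀ - f (insert s(u, v) S₀)) ^ 2
    = (∑ S₀ ∈ (G.edgeFinset.erase s(u, v)).powerset,
        min (wtWRC G.edgeFinset (fun a => 1 - (β a)⁻¹) lam S₀)
            (wtWRC G.edgeFinset (fun a => 1 - (β a)⁻¹) lam (insert s(u, v) S₀))
          * (f S₀ - f (insert s(u, v) S₀)) ^ 2)
      / ZWRC G.edgeFinset (fun a => 1 - (β a)⁻¹) lam from by
    rw [Finset.sum_div]
    exact Finset.sum_congr rfl fun S₀ _ => by rw [hcast S₀, div_mul_eq_mul_div]]
  rw [div_le_iff₀ hZ]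
  have := le_of_mul_le_mul_left (by linarith [hmain] : (∏ a ∈ G.edgeFinset, β a)
    * ∑ S₀ ∈ (G.edgeFinset.erase s(u, v)).powerset,
      min (wtWRC G.edgeFinset (fun a => 1 - (β a)⁻¹) lam S₀)
          (wtWRC G.edgeFinset (fun a => 1 - (β a)⁻¹) lam (insert s(u, v) S₀))
        * (f S₀ - f (insert s(u, v) S₀)) ^ 2
      ≤ (∏ a ∈ G.edgeFinset, β a)
        * (ZWRC G.edgeFinset (fun a => 1 - (β a)⁻¹) lam
          * (6 * dirichletOn G.edgeFinset.powerset
            (piWRC G.edgeFinset (fun a => 1 - (β a)⁻¹) lam) (PSWwrc G.edgeFinset β lam) f))) hB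
  linarith [this]

end SWProof
namespace SWProof
set_option linter.unusedSectionVars false
set_option maxHeartbeats 3200000
variable {V : Type*} [Fintype V] [DecidableEq V]
variable {G : SimpleGraph V} [DecidableRel G.Adj] {β : Sym2 V → ℝ} {lam : V → ℝ}

lemma dirichlet_EF_nonneg (hβ : ∀ e ∈ G.edgeFinset, 1 < β e)
    (hlam : ∀ v : V, 0 < lam v ∧ lam v ≤ 1) (f : Finset (Sym2 V) → ℝ) :
    0 ≤ dirichletOn G.edgeFinset.powerset (piWRC G.edgeFinset (fun e => 1 - (β e)⁻¹) lam)
        (PEF G.edgeFinset (piWRC G.edgeFinset (fun e => 1 - (β e)⁻¹) lam)) f := by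
  rw [dirichlet_EF hβ hlam f]
  refine mul_nonneg (by positivity) ?_
  refine Finset.sum_nonneg fun e he => Finset.sum_nonneg fun S₀ hS₀ => ?_
  have h1 : S₀ ⊆ G.edgeFinset :=
    (Finset.mem_powerset.1 hS₀).trans (Finset.erase_subset _ _)
  have h2 : insert e S₀ ⊆ G.edgeFinset := Finset.insert_subset he h1
  exact mul_nonneg (le_min (piWRC_pos hβ hlam h1).le (piWRC_pos hβ hlam h2).le) (sq_nonneg _)

lemma varOn_nonneg (hβ : ∀ e ∈ G.edgeFinset, 1 < β e)
    (hlam : ∀ v : V, 0 < lam v ∧ lam v ≤ 1) (f : Finset (Sym2 V) → ℝ) :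
    0 ≤ varOn G.edgeFinset.powerset (piWRC G.edgeFinset (fun e => 1 - (β e)⁻¹) lam) f := by
  unfold varOn
  have hnn : ∀ S ∈ G.edgeFinset.powerset,
      0 ≤ piWRC G.edgeFinset (fun e => 1 - (β e)⁻¹) lam S := fun S hS =>
    (piWRC_pos hβ hlam (Finset.mem_powerset.1 hS)).le
  have hcs := Finset.sum_mul_sq_le_sq_mul_sq G.edgeFinset.powerset
    (fun S => Real.sqrt (piWRC G.edgeFinset (fun e => 1 - (β e)⁻¹) lam S))
    (fun S => Real.sqrt (piWRC G.edgeFinset (fun e => 1 - (β e)⁻¹) lam S) * f S)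
  have h1 : ∑ S ∈ G.edgeFinset.powerset,
      Real.sqrt (piWRC G.edgeFinset (fun e => 1 - (β e)⁻¹) lam S)
        * (Real.sqrt (piWRC G.edgeFinset (fun e => 1 - (β e)⁻¹) lam S) * f S)
      = ∑ S ∈ G.edgeFinset.powerset,
          piWRC G.edgeFinset (fun e => 1 - (β e)⁻¹) lam S * f S :=
    Finset.sum_congr rfl fun S hS => by rw [← mul_assoc, Real.mul_self_sqrt (hnn S hS)]
  have h2 : ∑ S ∈ G.edgeFinset.powerset,
      (Real.sqrt (piWRC G.edgeFinset (fun e => 1 - (β e)⁻¹) lam S)) ^ 2 = 1 :=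
    (Finset.sum_congr rfl fun S hS => Real.sq_sqrt (hnn S hS)).trans
      (sum_piWRC (lam := lam) hβ hlam)
  have h3 : ∑ S ∈ G.edgeFinset.powerset,
      (Real.sqrt (piWRC G.edgeFinset (fun e => 1 - (β e)⁻¹) lam S) * f S) ^ 2
      = ∑ S ∈ G.edgeFinset.powerset,
          piWRC G.edgeFinset (fun e => 1 - (β e)⁻¹) lam S * f S ^ 2 :=
    Finset.sum_congr rfl fun S hS => by rw [mul_pow, Real.sq_sqrt (hnn S hS)]
  rw [h1, h2, h3, one_mul] at hcs
  linarith

/-- The core comparison: `D_EF(f) ≤ 3 D_SW(f)`. -/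
lemma core_comparison (hβ : ∀ e ∈ G.edgeFinset, 1 < β e)
    (hlam : ∀ v : V, 0 < lam v ∧ lam v ≤ 1) (hne : G.edgeFinset.Nonempty)
    (f : Finset (Sym2 V) → ℝ) :
    dirichletOn G.edgeFinset.powerset (piWRC G.edgeFinset (fun e => 1 - (β e)⁻¹) lam)
        (PEF G.edgeFinset (piWRC G.edgeFinset (fun e => 1 - (β e)⁻¹) lam)) f
      ≤ 3 * dirichletOn G.edgeFinset.powerset
          (piWRC G.edgeFinset (fun e => 1 - (β e)⁻¹) lam) (PSWwrc G.edgeFinset β lam) f := by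
  rw [dirichlet_EF hβ hlam f]
  have hm : (0:ℝ) < (G.edgeFinset.card : ℝ) := by
    exact_mod_cast Finset.card_pos.2 hne
  have hsum : ∑ e ∈ G.edgeFinset, ∑ S₀ ∈ (G.edgeFinset.erase e).powerset,
      min (piWRC G.edgeFinset (fun a => 1 - (β a)⁻¹) lam S₀)
          (piWRC G.edgeFinset (fun a => 1 - (β a)⁻¹) lam (insert e S₀))
        * (f S₀ - f (insert e S₀)) ^ 2
      ≤ (G.edgeFinset.card : ℝ) * (6 * dirichletOn G.edgeFinset.powerset
          (piWRC G.edgeFinset (fun e => 1 - (β e)⁻¹) lam) (PSWwrc G.edgeFinset β lam) f) := by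
    calc ∑ e ∈ G.edgeFinset, ∑ S₀ ∈ (G.edgeFinset.erase e).powerset,
        min (piWRC G.edgeFinset (fun a => 1 - (β a)⁻¹) lam S₀)
            (piWRC G.edgeFinset (fun a => 1 - (β a)⁻¹) lam (insert e S₀))
          * (f S₀ - f (insert e S₀)) ^ 2
        ≤ ∑ e ∈ G.edgeFinset, 6 * dirichletOn G.edgeFinset.powerset
            (piWRC G.edgeFinset (fun e => 1 - (β e)⁻¹) lam) (PSWwrc G.edgeFinset β lam) f :=
          Finset.sum_le_sum fun e he => per_edge hβ hlam he f
      _ = (G.edgeFinset.card : ℝ) * (6 * dirichletOn G.edgeFinset.powerset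
            (piWRC G.edgeFinset (fun e => 1 - (β e)⁻¹) lam) (PSWwrc G.edgeFinset β lam) f) := by
          rw [Finset.sum_const, nsmul_eq_mul]
  calc (1 / (2 * (G.edgeFinset.card : ℝ))) * ∑ e ∈ G.edgeFinset,
      ∑ S₀ ∈ (G.edgeFinset.erase e).powerset,
        min (piWRC G.edgeFinset (fun a => 1 - (β a)⁻¹) lam S₀)
            (piWRC G.edgeFinset (fun a => 1 - (β a)⁻¹) lam (insert e S₀))
          * (f S₀ - f (insert e S₀)) ^ 2
      ≤ (1 / (2 * (G.edgeFinset.card : ℝ))) * ((G.edgeFinset.card : ℝ)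
          * (6 * dirichletOn G.edgeFinset.powerset
            (piWRC G.edgeFinset (fun e => 1 - (β e)⁻¹) lam) (PSWwrc G.edgeFinset β lam) f)) :=
        mul_le_mul_of_nonneg_left hsum (by positivity)
    _ = 3 * dirichletOn G.edgeFinset.powerset
          (piWRC G.edgeFinset (fun e => 1 - (β e)⁻¹) lam) (PSWwrc G.edgeFinset β lam) f := by
        rw [one_div, mul_inv, show ((2:ℝ))⁻¹ * ((G.edgeFinset.card : ℝ))⁻¹
            * ((G.edgeFinset.card : ℝ) * (6 * dirichletOn G.edgeFinset.powerset
              (piWRC G.edgeFinset (fun e => 1 - (β e)⁻¹) lam) (PSWwrc G.edgeFinset β lam) f))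
          = (((G.edgeFinset.card : ℝ))⁻¹ * (G.edgeFinset.card : ℝ))
            * (3 * dirichletOn G.edgeFinset.powerset
              (piWRC G.edgeFinset (fun e => 1 - (β e)⁻¹) lam) (PSWwrc G.edgeFinset β lam) f)
          from by ring, inv_mul_cancel₀ hm.ne', one_mul]

end SWProof
set_option maxHeartbeats 4000000

/-- Comparison of the Swendsen-Wang and edge-flipping dynamics for the weighted random
cluster model with `p_e = 1 − 1/β_e`: `Gap(P_SW^wrc) ≥ Gap(P_EF)/3`. -/
theorem sw_wrc_vs_edge_flip_gap {V : Type*} [Fintype V] [DecidableEq V]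
    (G : SimpleGraph V) [DecidableRel G.Adj]
    (β : Sym2 V → ℝ) (lam : V → ℝ)
    (hβ : ∀ e ∈ G.edgeFinset, 1 < β e)
    (hlam : ∀ v : V, 0 < lam v ∧ lam v ≤ 1) :
    gapOn G.edgeFinset.powerset (piWRC G.edgeFinset (fun e => 1 - (β e)⁻¹) lam)
        (PSWwrc G.edgeFinset β lam) ≥
      gapOn G.edgeFinset.powerset (piWRC G.edgeFinset (fun e => 1 - (β e)⁻¹) lam)
        (PEF G.edgeFinset (piWRC G.edgeFinset (fun e => 1 - (β e)⁻¹) lam)) / 3 := by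
  classical
  by_cases hne : G.edgeFinset.Nonempty
  · unfold gapOn
    rcases Set.eq_empty_or_nonempty {f : Finset (Sym2 V) → ℝ |
        varOn G.edgeFinset.powerset (piWRC G.edgeFinset (fun e => 1 - (β e)⁻¹) lam) f ≠ 0}
      with hdom | hdom
    · rw [hdom, Set.image_empty, Set.image_empty, Real.sInf_empty]
      norm_num
    · have hvarpos : ∀ f : Finset (Sym2 V) → ℝ, f ∈ {f : Finset (Sym2 V) → ℝ |
          varOn G.edgeFinset.powerset (piWRC G.edgeFinset (fun e => 1 - (β e)⁻¹) lam) f ≠ 0}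
          → 0 < varOn G.edgeFinset.powerset
              (piWRC G.edgeFinset (fun e => 1 - (β e)⁻¹) lam) f := fun f hf =>
        lt_of_le_of_ne (SWProof.varOn_nonneg hβ hlam f) (Ne.symm hf)
      have hbdd : BddBelow ((fun f => dirichletOn G.edgeFinset.powerset
          (piWRC G.edgeFinset (fun e => 1 - (β e)⁻¹) lam)
          (PEF G.edgeFinset (piWRC G.edgeFinset (fun e => 1 - (β e)⁻¹) lam)) f
          / varOn G.edgeFinset.powerset (piWRC G.edgeFinset (fun e => 1 - (β e)⁻¹) lam) f)
          '' {f : Finset (Sym2 V) → ℝ | varOn G.edgeFinset.powerset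
              (piWRC G.edgeFinset (fun e => 1 - (β e)⁻¹) lam) f ≠ 0}) := by
        refine ⟨0, ?_⟩
        rintro y ⟨f, hf, rfl⟩
        exact div_nonneg (SWProof.dirichlet_EF_nonneg hβ hlam f) (hvarpos f hf).le
      refine le_csInf (hdom.image _) ?_
      rintro a ⟨f, hf, rfl⟩
      have hv := hvarpos f hf
      have h1 : sInf ((fun f => dirichletOn G.edgeFinset.powerset
          (piWRC G.edgeFinset (fun e => 1 - (β e)⁻¹) lam)
          (PEF G.edgeFinset (piWRC G.edgeFinset (fun e => 1 - (β e)⁻¹) lam)) f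
          / varOn G.edgeFinset.powerset (piWRC G.edgeFinset (fun e => 1 - (β e)⁻¹) lam) f)
          '' {f : Finset (Sym2 V) → ℝ | varOn G.edgeFinset.powerset
              (piWRC G.edgeFinset (fun e => 1 - (β e)⁻¹) lam) f ≠ 0})
          ≤ dirichletOn G.edgeFinset.powerset
            (piWRC G.edgeFinset (fun e => 1 - (β e)⁻¹) lam)
            (PEF G.edgeFinset (piWRC G.edgeFinset (fun e => 1 - (β e)⁻¹) lam)) f
          / varOn G.edgeFinset.powerset (piWRC G.edgeFinset (fun e => 1 - (β e)⁻¹) lam) f :=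
        csInf_le hbdd (Set.mem_image_of_mem _ hf)
      have h2 := SWProof.core_comparison hβ hlam hne f
      have h3 : dirichletOn G.edgeFinset.powerset
            (piWRC G.edgeFinset (fun e => 1 - (β e)⁻¹) lam)
            (PEF G.edgeFinset (piWRC G.edgeFinset (fun e => 1 - (β e)⁻¹) lam)) f
          / varOn G.edgeFinset.powerset (piWRC G.edgeFinset (fun e => 1 - (β e)⁻¹) lam) f
          ≤ 3 * (dirichletOn G.edgeFinset.powerset
            (piWRC G.edgeFinset (fun e => 1 - (β e)⁻¹) lam) (PSWwrc G.edgeFinset β lam) f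
          / varOn G.edgeFinset.powerset
            (piWRC G.edgeFinset (fun e => 1 - (β e)⁻¹) lam) f) := by
        rw [← mul_div_assoc, div_le_div_iff₀ hv hv]
        nlinarith [h2, hv]
      dsimp only
      linarith [h1, h3]
  · have hE : G.edgeFinset = ∅ := Finset.not_nonempty_iff_eq_empty.1 hne
    have hπ : piWRC (∅ : Finset (Sym2 V)) (fun e => 1 - (β e)⁻¹) lam ∅ = 1 := by
      unfold piWRC ZWRC
      rw [Finset.powerset_empty, Finset.sum_singleton]
      refine div_self (ne_of_gt ?_)
      unfold wtWRC
      rw [sdiff_self]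
      simp only [Finset.bot_eq_empty, Finset.prod_empty, one_mul]
      exact SWProof.clusterProd_pos hlam ∅
    have hvar0 : ∀ f : Finset (Sym2 V) → ℝ,
        varOn G.edgeFinset.powerset (piWRC G.edgeFinset (fun e => 1 - (β e)⁻¹) lam) f = 0 := by
      intro f
      unfold varOn
      rw [hE, Finset.powerset_empty, Finset.sum_singleton, Finset.sum_singleton, hπ]
      ring
    have hdom : {f : Finset (Sym2 V) → ℝ | varOn G.edgeFinset.powerset
        (piWRC G.edgeFinset (fun e => 1 - (β e)⁻¹) lam) f ≠ 0} = ∅ := by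
      ext f
      simp [hvar0 f]
    unfold gapOn
    rw [hdom, Set.image_empty, Set.image_empty, Real.sInf_empty]
    norm_num

end
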